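/- Let λ ∈ V be a dominant weight, w ∈ W, and suppose μ ∈ P_λ^w. Then for every index 1 ≤ i ≤ r and every pair u, v ∈ W satisfying w⁻¹ * v ≤ u, the inequality ⟨λ, u x_i⟩ ≤ ⟨μ, v x_i⟩ holds. -/

import Mathlib

open scoped Classical

/-- Data of a root system with a fixed choice of simple roots: an ambient
`ℚ`-vector space `V`, a set of roots `Φ` with a distinguished subset `pos` of
positive roots, a coroot functional `coroot β = ⟨·, β^∨⟩` for each root, and
simple roots `α 1, …, α r`. -/
structure RootData where
  r : ℕ
  V : Type
  [grp : AddCommGroup V]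
  [mod : Module ℚ V]
  Φ : Set V
  pos : Set V
  coroot : V → Module.Dual ℚ V
  α : Fin r → V

attribute [instance] RootData.grp RootData.mod

namespace RootData

variable (R : RootData)

/-- The group of linear automorphisms of `V`, in which the Weyl group lives. -/
abbrev Aut : Type := R.V ≃ₗ[ℚ] R.V

/-- The linear map `v ↦ v - ⟨v, β^∨⟩ β`. -/
noncomputable def reflMap (β : R.V) : R.V →ₗ[ℚ] R.V :=
  LinearMap.id - (R.coroot β).smulRight β

/-- The reflection `s_β` associated to a root `β`, as a linear automorphism. -/
noncomputable def s (β : R.V) : R.Aut :=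
  if h : (R.reflMap β).comp (R.reflMap β) = LinearMap.id then
    LinearEquiv.ofLinear (R.reflMap β) (R.reflMap β) h h
  else LinearEquiv.refl ℚ R.V

/-- The simple reflections `s_i := s_{α_i}`. -/
noncomputable def S (i : Fin R.r) : R.Aut := R.s (R.α i)

/-- The Weyl group `W`, generated by the simple reflections. -/
noncomputable def weylGroup : Subgroup R.Aut := Subgroup.closure (Set.range R.S)

/-- The product `s_{i_1} ⋯ s_{i_k}` of a word in the simple reflections. -/
noncomputable def wordProd (l : List (Fin R.r)) : R.Aut := (l.map R.S).prod

/-- The length function on `W`: least length of a word in the simple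
reflections expressing the given element. -/
noncomputable def len (w : R.Aut) : ℕ :=
  sInf {n | ∃ l : List (Fin R.r), l.length = n ∧ R.wordProd l = w}

/-- A word is reduced if its length equals the length of its product. -/
def Reduced (l : List (Fin R.r)) : Prop := R.len (R.wordProd l) = l.length

/-- The Bruhat order on `W`: `u ≤ w` iff some reduced word for `w` has a
subword whose product is `u`. -/
def BruhatLE (u w : R.Aut) : Prop :=
  ∃ l : List (Fin R.r), R.Reduced l ∧ R.wordProd l = w ∧
    ∃ l' : List (Fin R.r), l'.Sublist l ∧ R.wordProd l' = u

/-- Strict Bruhat order. -/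
def BruhatLT (u w : R.Aut) : Prop := R.BruhatLE u w ∧ u ≠ w

/-- One step of the Demazure product: `s_i * w := max {w, s_i w}`. -/
noncomputable def dmulStep (i : Fin R.r) (x : R.Aut) : R.Aut :=
  if R.len x < R.len (R.S i * x) then R.S i * x else x

/-- Demazure product of a word in the simple reflections against `w`:
`s_{i_1} * (s_{i_2} * (⋯ * (s_{i_k} * w)))`. -/
noncomputable def dmulList (l : List (Fin R.r)) (w : R.Aut) : R.Aut :=
  l.foldr R.dmulStep w

/-- The Demazure product `v * w` on the Weyl group, computed by choosing a
reduced word for `v` (it is independent of this choice). -/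
noncomputable def dmul (v w : R.Aut) : R.Aut :=
  if h : ∃ l : List (Fin R.r), R.Reduced l ∧ R.wordProd l = v then
    R.dmulList h.choose w
  else v * w

/-- The parabolic subgroup `W_{P_i}` generated by the simple reflections
`s_j`, `j ≠ i`. -/
noncomputable def WPar (i : Fin R.r) : Subgroup R.Aut :=
  Subgroup.closure (R.S '' {j | j ≠ i})

/-- `W^{P_i}`: the set of minimal-length representatives of cosets of
`W/W_{P_i}`. -/
def minReps (i : Fin R.r) : Set R.Aut :=
  {v | v ∈ R.weylGroup ∧ ∀ p ∈ R.WPar i, R.len v ≤ R.len (v * p)}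

/-- `u` is the minimal-length representative of the coset `w W_{P_i}`. -/
def IsMinRep (i : Fin R.r) (u w : R.Aut) : Prop :=
  u ∈ R.minReps i ∧ u⁻¹ * w ∈ R.WPar i

/-- A weight is dominant if it pairs nonnegatively with every simple coroot. -/
def Dominant (lam : R.V) : Prop := ∀ i : Fin R.r, 0 ≤ R.coroot (R.α i) lam

/-- The dual action of the Weyl group on `V* `: `(u f)(v) = f(u⁻¹ v)`. -/
noncomputable def dualAct (u : R.Aut) (f : Module.Dual ℚ R.V) : Module.Dual ℚ R.V :=
  f.comp (u.symm : R.V →ₗ[ℚ] R.V)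

/-- The Demazure polytope `P_λ^w := conv {uλ : u ∈ W, u ≤ w}`. -/
noncomputable def demPolytope (lam : R.V) (w : R.Aut) : Set R.V :=
  convexHull ℚ {m | ∃ u : R.Aut, u ∈ R.weylGroup ∧ R.BruhatLE u w ∧ m = u lam}

/-- Membership in the weight lattice `X`. -/
def IsWeight (lam : R.V) : Prop := ∀ β ∈ R.Φ, ∃ m : ℤ, R.coroot β lam = (m : ℚ)

/-- The root lattice `Q = ℤΦ`. -/
noncomputable def rootLattice : AddSubgroup R.V := AddSubgroup.closure R.Φ

/-- `w₀` is the longest element of the Weyl group. -/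
def IsLongest (w₀ : R.Aut) : Prop :=
  w₀ ∈ R.weylGroup ∧ ∀ g ∈ R.weylGroup, R.len g ≤ R.len w₀

/-- The positive roots `Φ_{P_i}⁺ = Φ⁺ ∩ span {α_j : j ≠ i}` of the standard
Levi subsystem. -/
def parPos (i : Fin R.r) : Set R.V :=
  {η | η ∈ R.pos ∧ η ∈ Submodule.span ℚ (R.α '' {j | j ≠ i})}

/-- The value `D_i (e^λ)` of the Demazure operator on a basis element of the
group ring `ℤ[X]`. -/
noncomputable def demOnBasis (i : Fin R.r) (lam : R.V) : R.V →₀ ℤ :=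
  if 0 ≤ ⌊R.coroot (R.α i) lam⌋ then
    ∑ k ∈ Finset.range (⌊R.coroot (R.α i) lam⌋.toNat + 1),
      Finsupp.single (lam - (k : ℚ) • R.α i) 1
  else if ⌊R.coroot (R.α i) lam⌋ = -1 then 0
  else - ∑ k ∈ Finset.range ((-⌊R.coroot (R.α i) lam⌋).toNat - 1),
      Finsupp.single (lam + ((k : ℚ) + 1) • R.α i) 1

/-- The Demazure operator `D_i`, as a `ℤ`-linear endomorphism of the group
ring `ℤ[X]` (realized as finitely supported functions `V →₀ ℤ`). -/
noncomputable def demOp (i : Fin R.r) : (R.V →₀ ℤ) →ₗ[ℤ] (R.V →₀ ℤ) :=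
  Finsupp.lsum ℤ fun lam => LinearMap.toSpanSingleton ℤ (R.V →₀ ℤ) (R.demOnBasis i lam)

/-- The Demazure character `D_{i_1} ⋯ D_{i_k} (e^λ)`. -/
noncomputable def demChar (l : List (Fin R.r)) (lam : R.V) : R.V →₀ ℤ :=
  l.foldr (fun i p => R.demOp i p) (Finsupp.single lam 1)

/-- The axioms of a finite crystallographic root system spanning `V`, with
simple roots `α_i` and positive roots `pos`. -/
structure IsRootSystem (R : RootData) : Prop where
  finite : R.Φ.Finite
  span_top : Submodule.span ℚ R.Φ = ⊤
  ne_zero : ∀ β ∈ R.Φ, β ≠ 0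
  coroot_self : ∀ β ∈ R.Φ, R.coroot β β = 2
  crystallographic : ∀ β ∈ R.Φ, ∀ γ ∈ R.Φ, ∃ m : ℤ, R.coroot β γ = (m : ℚ)
  reflection_stable : ∀ β ∈ R.Φ, ∀ γ ∈ R.Φ, γ - R.coroot β γ • β ∈ R.Φ
  simple_mem : ∀ i, R.α i ∈ R.Φ
  indep : LinearIndependent ℚ R.α
  pos_subset : R.pos ⊆ R.Φ
  pos_or_neg : ∀ β ∈ R.Φ, (β ∈ R.pos ∧ -β ∉ R.pos) ∨ (β ∉ R.pos ∧ -β ∈ R.pos)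
  simple_pos : ∀ i, R.α i ∈ R.pos
  pos_nonneg_comb : ∀ β ∈ R.pos, ∃ c : Fin R.r → ℚ, (∀ i, 0 ≤ c i) ∧ β = ∑ i, c i • R.α i

end RootData
namespace RootData

section Aux

variable {R : RootData}

lemma mul_app (f g : R.Aut) (v : R.V) : (f * g) v = f (g v) := rfl
lemma one_app (v : R.V) : (1 : R.Aut) v = v := rfl
lemma inv_app (f : R.Aut) (v : R.V) : f⁻¹ v = f.symm v := rfl

/-- expressible as a word in simple reflections -/
def Ex (R : RootData) (g : R.Aut) : Prop := ∃ l : List (Fin R.r), R.wordProd l = g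

lemma wordProd_nil : R.wordProd [] = 1 := rfl

lemma wordProd_cons (i : Fin R.r) (l : List (Fin R.r)) :
    R.wordProd (i :: l) = R.S i * R.wordProd l := by
  simp [wordProd, List.prod_cons]

lemma wordProd_append (l l' : List (Fin R.r)) :
    R.wordProd (l ++ l') = R.wordProd l * R.wordProd l' := by
  simp [wordProd, List.prod_append]

lemma reflMap_invol (hR : R.IsRootSystem) {β : R.V} (hβ : β ∈ R.Φ) :
    (R.reflMap β).comp (R.reflMap β) = LinearMap.id := by
  have h2 := hR.coroot_self β hβ
  ext v
  simp only [reflMap, LinearMap.comp_apply, LinearMap.sub_apply, LinearMap.id_apply,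
    LinearMap.coe_smulRight, map_sub, map_smul, h2]
  rw [smul_sub, smul_smul]
  module

lemma s_apply (hR : R.IsRootSystem) {β : R.V} (hβ : β ∈ R.Φ) (v : R.V) :
    R.s β v = v - R.coroot β v • β := by
  rw [s, dif_pos (reflMap_invol hR hβ)]
  rfl

lemma S_apply (hR : R.IsRootSystem) (i : Fin R.r) (v : R.V) :
    R.S i v = v - R.coroot (R.α i) v • R.α i := s_apply hR (hR.simple_mem i) v

lemma S_mul_self (hR : R.IsRootSystem) (i : Fin R.r) : R.S i * R.S i = 1 := by
  apply LinearEquiv.toLinearMap_injective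
  apply LinearMap.ext
  intro v
  have h2 := hR.coroot_self _ (hR.simple_mem i)
  show (R.S i * R.S i) v = (1 : R.Aut) v
  rw [mul_app, one_app, S_apply hR, S_apply hR, map_sub, map_smul, h2]
  simp only [smul_eq_mul]
  module

lemma S_inv (hR : R.IsRootSystem) (i : Fin R.r) : (R.S i)⁻¹ = R.S i := by
  rw [inv_eq_iff_mul_eq_one, S_mul_self hR]

lemma wordProd_reverse (hR : R.IsRootSystem) (l : List (Fin R.r)) :
    R.wordProd l.reverse = (R.wordProd l)⁻¹ := by
  induction l with
  | nil => simp [wordProd_nil, wordProd]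
  | cons i t ih =>
      rw [List.reverse_cons, wordProd_append, wordProd_cons, ih]
      rw [wordProd_nil, mul_one, wordProd_cons, mul_inv_rev, S_inv hR]

lemma Ex.one : R.Ex 1 := ⟨[], rfl⟩

lemma Ex.S (i : Fin R.r) : R.Ex (R.S i) := ⟨[i], by simp [wordProd]⟩

lemma Ex.mul {g h : R.Aut} (hg : R.Ex g) (hh : R.Ex h) : R.Ex (g * h) := by
  obtain ⟨l, rfl⟩ := hg; obtain ⟨m, rfl⟩ := hh
  exact ⟨l ++ m, wordProd_append l m⟩

lemma Ex.inv (hR : R.IsRootSystem) {g : R.Aut} (hg : R.Ex g) : R.Ex g⁻¹ := by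
  obtain ⟨l, rfl⟩ := hg
  exact ⟨l.reverse, wordProd_reverse hR l⟩

lemma Ex.of_mem_weylGroup (hR : R.IsRootSystem) {g : R.Aut} (hg : g ∈ R.weylGroup) : R.Ex g := by
  induction hg using Subgroup.closure_induction with
  | mem x hx => obtain ⟨i, rfl⟩ := hx; exact Ex.S i
  | one => exact Ex.one
  | mul a b _ _ ha hb => exact ha.mul hb
  | inv a _ ha => exact ha.inv hR

end Aux

end RootData
namespace RootData

section Aux2

variable {R : RootData}

lemma span_alpha_top (hR : R.IsRootSystem) :
    Submodule.span ℚ (Set.range R.α) = ⊤ := by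
  rw [eq_top_iff, ← hR.span_top, Submodule.span_le]
  intro β hβ
  have key : ∀ γ ∈ R.pos, γ ∈ Submodule.span ℚ (Set.range R.α) := by
    intro γ hγ
    obtain ⟨c, _, rfl⟩ := hR.pos_nonneg_comb γ hγ
    exact Submodule.sum_mem _ fun i _ =>
      Submodule.smul_mem _ _ (Submodule.subset_span ⟨i, rfl⟩)
  rcases hR.pos_or_neg β hβ with ⟨h1, _⟩ | ⟨_, h2⟩
  · exact key β h1
  · have := key _ h2
    simpa using Submodule.neg_mem _ this

/-- The basis of simple roots. -/
noncomputable def basis (hR : R.IsRootSystem) : Module.Basis (Fin R.r) ℚ R.V :=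
  Module.Basis.mk hR.indep (by rw [span_alpha_top hR])

lemma basis_apply (hR : R.IsRootSystem) (i : Fin R.r) : basis hR i = R.α i :=
  Module.Basis.mk_apply _ _ i

lemma repr_of_comb (hR : R.IsRootSystem) (c : Fin R.r → ℚ) (j : Fin R.r) :
    (basis hR).repr (∑ i, c i • R.α i) j = c j := by
  have : (∑ i, c i • R.α i) = ∑ i, c i • basis hR i := by
    simp [basis_apply hR]
  rw [this, Module.Basis.repr_sum_self]

lemma pos_repr_nonneg (hR : R.IsRootSystem) {β : R.V} (hβ : β ∈ R.pos) (j : Fin R.r) :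
    0 ≤ (basis hR).repr β j := by
  obtain ⟨c, hc, rfl⟩ := hR.pos_nonneg_comb β hβ
  rw [repr_of_comb hR]
  exact hc j

lemma neg_mem_pos_iff (hR : R.IsRootSystem) {β : R.V} (hβ : β ∈ R.Φ) :
    β ∈ R.pos ↔ -β ∉ R.pos := by
  rcases hR.pos_or_neg β hβ with ⟨h1, h2⟩ | ⟨h1, h2⟩ <;> constructor <;> tauto

lemma phi_neg_mem (hR : R.IsRootSystem) {β : R.V} (hβ : β ∈ R.Φ) : -β ∈ R.Φ := by
  rcases hR.pos_or_neg β hβ with ⟨h1, _⟩ | ⟨_, h2⟩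
  · have := hR.reflection_stable β hβ β hβ
    rw [hR.coroot_self β hβ] at this
    convert this using 1
    module
  · exact hR.pos_subset h2

/-- if some coordinate is positive, the root is positive -/
lemma pos_of_repr_pos (hR : R.IsRootSystem) {β : R.V} (hβ : β ∈ R.Φ) (j : Fin R.r)
    (h : 0 < (basis hR).repr β j) : β ∈ R.pos := by
  by_contra hn
  rcases hR.pos_or_neg β hβ with ⟨h1, _⟩ | ⟨_, h2⟩
  · exact hn h1
  · have := pos_repr_nonneg hR h2 j
    rw [map_neg] at this
    simp only [Finsupp.coe_neg, Pi.neg_apply] at this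
    linarith

/-- Roots are nonzero in each expression sense; positive roots have a positive coordinate -/
lemma pos_exists_repr_pos (hR : R.IsRootSystem) {β : R.V} (hβ : β ∈ R.pos) :
    ∃ j, 0 < (basis hR).repr β j := by
  by_contra hn
  push_neg at hn
  have hz : β = 0 := by
    have : ∀ j, (basis hR).repr β j = 0 := fun j =>
      le_antisymm (hn j) (pos_repr_nonneg hR hβ j)
    have h0 : (basis hR).repr β = 0 := Finsupp.ext this
    exact (basis hR).repr.map_eq_zero_iff.mp h0
  exact hR.ne_zero β (hR.pos_subset hβ) hz

/-- stability of Φ under words -/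
lemma Ex.maps_phi (hR : R.IsRootSystem) {g : R.Aut} (hg : R.Ex g) {β : R.V} (hβ : β ∈ R.Φ) :
    g β ∈ R.Φ := by
  obtain ⟨l, rfl⟩ := hg
  induction l generalizing β with
  | nil => simpa [wordProd_nil, one_app]
  | cons i t ih =>
      rw [wordProd_cons, mul_app]
      have h1 : R.wordProd t β ∈ R.Φ := ih hβ
      rw [S_apply hR]
      exact hR.reflection_stable _ (hR.simple_mem i) _ h1

lemma phi_dichotomy (hR : R.IsRootSystem) {β : R.V} (hβ : β ∈ R.Φ) :
    β ∈ R.pos ∨ -β ∈ R.pos := by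
  rcases hR.pos_or_neg β hβ with ⟨h1, _⟩ | ⟨_, h2⟩
  · exact Or.inl h1
  · exact Or.inr h2

lemma not_pos_and_neg (hR : R.IsRootSystem) {β : R.V} (hβ : β ∈ R.Φ)
    (h1 : β ∈ R.pos) (h2 : -β ∈ R.pos) : False := by
  rcases hR.pos_or_neg β hβ with ⟨_, h⟩ | ⟨h, _⟩ <;> tauto

end Aux2

end RootData
namespace RootData

section Aux3

variable {R : RootData}

lemma wordProd_singleton (i : Fin R.r) : R.wordProd [i] = R.S i := by simp [wordProd]

lemma len_le {g : R.Aut} {l : List (Fin R.r)} (h : R.wordProd l = g) :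
    R.len g ≤ l.length :=
  Nat.sInf_le ⟨l, rfl, h⟩

lemma exists_reduced_word {g : R.Aut} (hg : R.Ex g) :
    ∃ l : List (Fin R.r), R.Reduced l ∧ R.wordProd l = g ∧ l.length = R.len g := by
  obtain ⟨l0, hl0⟩ := hg
  have hne : {n | ∃ l : List (Fin R.r), l.length = n ∧ R.wordProd l = g}.Nonempty :=
    ⟨l0.length, l0, rfl, hl0⟩
  obtain ⟨l, hlen, hprod⟩ := Nat.sInf_mem hne
  refine ⟨l, ?_, hprod, hlen.symm ▸ rfl⟩
  rw [Reduced, hprod]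
  exact hlen.symm ▸ rfl

lemma exists_reduced (hg : ∃ l : List (Fin R.r), R.wordProd l = (g : R.Aut)) :
    ∃ l : List (Fin R.r), R.Reduced l ∧ R.wordProd l = g := by
  obtain ⟨l, h1, h2, _⟩ := exists_reduced_word hg
  exact ⟨l, h1, h2⟩

lemma len_one : R.len (1 : R.Aut) = 0 :=
  Nat.le_zero.mp (len_le (l := []) rfl)

lemma eq_one_of_len_zero {g : R.Aut} (hg : R.Ex g) (h : R.len g = 0) : g = 1 := by
  obtain ⟨l, _, hprod, hlen⟩ := exists_reduced_word hg
  rw [h] at hlen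
  rw [List.length_eq_zero_iff] at hlen
  rw [← hprod, hlen, wordProd_nil]

lemma len_inv (hR : R.IsRootSystem) {g : R.Aut} (hg : R.Ex g) :
    R.len g⁻¹ = R.len g := by
  have key : ∀ h : R.Aut, R.Ex h → R.len h⁻¹ ≤ R.len h := by
    intro h hh
    obtain ⟨l, _, hprod, hlen⟩ := exists_reduced_word hh
    have := len_le (g := h⁻¹) (l := l.reverse) (by rw [wordProd_reverse hR, hprod])
    simpa [hlen] using this
  have h1 := key g hg
  have h2 := key g⁻¹ (hg.inv hR)
  rw [inv_inv] at h2
  omega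

lemma len_mul_S_le {g : R.Aut} (hg : R.Ex g) (i : Fin R.r) :
    R.len (g * R.S i) ≤ R.len g + 1 := by
  obtain ⟨l, _, hprod, hlen⟩ := exists_reduced_word hg
  have := len_le (g := g * R.S i) (l := l ++ [i]) (by
    rw [wordProd_append, hprod, wordProd_singleton])
  simpa [hlen] using this

lemma len_ge_sub {g : R.Aut} (hg : R.Ex g) (hR : R.IsRootSystem) (i : Fin R.r) :
    R.len g ≤ R.len (g * R.S i) + 1 := by
  have h1 : g = (g * R.S i) * R.S i := by
    rw [mul_assoc, S_mul_self hR, mul_one]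
  have := len_mul_S_le (g := g * R.S i) (hg.mul (Ex.S i)) i
  calc R.len g = R.len ((g * R.S i) * R.S i) := by rw [← h1]
    _ ≤ R.len (g * R.S i) + 1 := len_mul_S_le ((hg.mul (Ex.S i))) i

lemma reduced_prefix (hR : R.IsRootSystem) {l : List (Fin R.r)} {i : Fin R.r}
    (h : R.Reduced (l ++ [i])) : R.Reduced l ∧ R.len (R.wordProd (l ++ [i])) = R.len (R.wordProd l) + 1 := by
  have hle : R.len (R.wordProd l) ≤ l.length := len_le rfl
  have h2 : R.len (R.wordProd (l ++ [i])) = l.length + 1 := by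
    rw [h]; simp
  have h3 : R.wordProd (l ++ [i]) = R.wordProd l * R.S i := by
    rw [wordProd_append, wordProd_singleton]
  have h4 : R.len (R.wordProd (l ++ [i])) ≤ R.len (R.wordProd l) + 1 := by
    rw [h3]; exact len_mul_S_le ⟨l, rfl⟩ i
  constructor
  · rw [Reduced]; omega
  · omega

end Aux3

end RootData
namespace RootData

section Aux4

variable {R : RootData}

lemma s_mul_self (hR : R.IsRootSystem) {β : R.V} (hβ : β ∈ R.Φ) : R.s β * R.s β = 1 := by
  apply LinearEquiv.toLinearMap_injective
  apply LinearMap.ext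
  intro v
  have h2 := hR.coroot_self _ hβ
  show (R.s β * R.s β) v = (1 : R.Aut) v
  rw [mul_app, one_app, s_apply hR hβ, s_apply hR hβ, map_sub, map_smul, h2]
  simp only [smul_eq_mul]
  module

lemma s_apply_self (hR : R.IsRootSystem) {β : R.V} (hβ : β ∈ R.Φ) : R.s β β = -β := by
  rw [s_apply hR hβ, hR.coroot_self _ hβ]
  module

lemma s_maps_phi (hR : R.IsRootSystem) {β γ : R.V} (hβ : β ∈ R.Φ) (hγ : γ ∈ R.Φ) :
    R.s β γ ∈ R.Φ := by
  rw [s_apply hR hβ]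
  exact hR.reflection_stable β hβ γ hγ

lemma finite_order_on_phi (hR : R.IsRootSystem) (t : R.Aut) (ht : ∀ γ ∈ R.Φ, t γ ∈ R.Φ) :
    ∃ n : ℕ, 0 < n ∧ ∀ γ ∈ R.Φ, (t ^ n) γ = γ := by
  haveI : Fintype R.Φ := hR.finite.fintype
  let σ : R.Φ → R.Φ := fun b => ⟨t b, ht b b.2⟩
  have hinj : Function.Injective σ := by
    intro a b hab
    have : t (a : R.V) = t (b : R.V) := congrArg Subtype.val hab
    exact Subtype.ext (t.injective this)
  have hbij : Function.Bijective σ := (Finite.injective_iff_bijective).mp hinj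
  let e : Equiv.Perm R.Φ := Equiv.ofBijective σ hbij
  have key : ∀ (k : ℕ) (γ : R.Φ), (t ^ k) (γ : R.V) = ((e ^ k) γ : R.V) := by
    intro k
    induction k with
    | zero => intro γ; simp [one_app]
    | succ k ih =>
        intro γ
        rw [pow_succ, pow_succ]
        have h0 : (t ^ k * t) (γ : R.V) = (t ^ k) (t (γ : R.V)) := rfl
        rw [h0]
        have h2 : t (γ : R.V) = ((e γ : R.Φ) : R.V) := rfl
        rw [h2, ih (e γ)]
        rfl
  refine ⟨orderOf e, orderOf_pos e, ?_⟩
  intro γ hγ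
  have := key (orderOf e) ⟨γ, hγ⟩
  rw [pow_orderOf_eq_one e] at this
  simpa using this

lemma aut_eq_of_eq_on_phi (hR : R.IsRootSystem) {f g : R.Aut}
    (h : ∀ γ ∈ R.Φ, f γ = g γ) : f = g := by
  apply LinearEquiv.toLinearMap_injective
  apply LinearMap.ext_on hR.span_top
  intro γ hγ
  exact h γ hγ

lemma refl_unique (hR : R.IsRootSystem) {β : R.V} (hβ : β ∈ R.Φ) (sm t : R.Aut)
    (hsmov : ∀ v, ∃ c : ℚ, sm v - v = c • β)
    (htmov : ∀ v, ∃ c : ℚ, t v - v = c • β)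
    (hsβ : sm β = -β) (htβ : t β = -β)
    (hsΦ : ∀ γ ∈ R.Φ, sm γ ∈ R.Φ) (htΦ : ∀ γ ∈ R.Φ, t γ ∈ R.Φ)
    (ht2 : t * t = 1) : sm = t := by
  set g : R.Aut := sm * t with hg
  have hgβ : g β = β := by
    rw [hg, mul_app, htβ, map_neg, hsβ, neg_neg]
  have hgmov : ∀ v, ∃ c : ℚ, g v - v = c • β := by
    intro v
    obtain ⟨c1, hc1⟩ := htmov v
    obtain ⟨c2, hc2⟩ := hsmov (t v)
    refine ⟨c2 + c1, ?_⟩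
    have h3 : g v - v = (sm (t v) - t v) + (t v - v) := by
      rw [hg, mul_app]; abel
    rw [h3, hc1, hc2, add_smul]
  have hgΦ : ∀ γ ∈ R.Φ, g γ ∈ R.Φ := fun γ hγ => hsΦ _ (htΦ _ hγ)
  obtain ⟨n, hn, hfix⟩ := finite_order_on_phi hR g hgΦ
  have key : ∀ (k : ℕ) (v : R.V), (g ^ k) v = v + (k : ℚ) • (g v - v) := by
    intro k
    induction k with
    | zero => intro v; simp [one_app]
    | succ k ih =>
        intro v
        rw [pow_succ']
        have h0 : (g * g ^ k) v = g ((g ^ k) v) := rfl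
        obtain ⟨c, hc⟩ := hgmov v
        have hfixc : g (c • β) = c • β := by rw [map_smul, hgβ]
        have h1 : g (g v) - g v = g v - v := by
          have h2 : g (g v) - g v = g (g v - v) := by rw [map_sub]
          rw [h2, hc, hfixc, ← hc]
        rw [h0, ih v, map_add, map_smul, map_sub, h1]
        push_cast
        module
  have hN : ∀ v, g v = v := by
    intro v
    have h1 : (g ^ n) v = v + (n : ℚ) • (g v - v) := key n v
    have h2 : (g ^ n) = 1 := by
      apply aut_eq_of_eq_on_phi hR
      intro γ hγ
      rw [hfix γ hγ, one_app]
    rw [h2, one_app] at h1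
    have h3 : (n : ℚ) • (g v - v) = 0 := left_eq_add.mp h1
    have hn0 : (n : ℚ) ≠ 0 := by exact_mod_cast hn.ne'
    rcases smul_eq_zero.mp h3 with h | h
    · exact absurd h hn0
    · exact sub_eq_zero.mp h
  have hg1 : g = 1 := by
    apply LinearEquiv.toLinearMap_injective
    apply LinearMap.ext
    intro v
    exact hN v
  have hst : sm * t = 1 := hg1
  calc sm = sm * (t * t) := by rw [ht2, mul_one]
    _ = (sm * t) * t := by rw [mul_assoc]
    _ = t := by rw [hst, one_mul]

end Aux4

end RootData
namespace RootData

section Aux5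

variable {R : RootData}

lemma smul_cancel_ne {c : ℚ} {v : R.V} (hv : v ≠ 0) (h : c • v = 0) : c = 0 := by
  by_contra hc
  apply hv
  calc v = c⁻¹ • (c • v) := by rw [smul_smul, inv_mul_cancel₀ hc, one_smul]
    _ = 0 := by rw [h, smul_zero]

lemma smul_eq_smul_cancel {c d : ℚ} {v : R.V} (hv : v ≠ 0) (h : c • v = d • v) : c = d := by
  have : (c - d) • v = 0 := by rw [sub_smul, h, sub_self]
  have := smul_cancel_ne hv this
  linarith

lemma conj_s_apply (hR : R.IsRootSystem) {β : R.V} (hβ : β ∈ R.Φ) (g : R.Aut) (v : R.V) :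
    (g * R.s β * g⁻¹) v = v - R.coroot β (g⁻¹ v) • (g β) := by
  have h1 : (g * R.s β * g⁻¹) v = g (R.s β (g⁻¹ v)) := rfl
  rw [h1, s_apply hR hβ, map_sub, map_smul]
  congr 1
  exact g.apply_symm_apply v

lemma coroot_equivariant (hR : R.IsRootSystem) {g : R.Aut} (hg : R.Ex g) {β : R.V}
    (hβ : β ∈ R.Φ) (v : R.V) : R.coroot (g β) v = R.coroot β (g⁻¹ v) := by
  have hgβ : g β ∈ R.Φ := hg.maps_phi hR hβ
  have hgβ0 : g β ≠ 0 := hR.ne_zero _ hgβ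
  have key : g * R.s β * g⁻¹ = R.s (g β) := by
    apply refl_unique hR hgβ
    · intro v
      refine ⟨-(R.coroot β (g⁻¹ v)), ?_⟩
      rw [conj_s_apply hR hβ, neg_smul]
      abel
    · intro v
      refine ⟨-(R.coroot (g β) v), ?_⟩
      rw [s_apply hR hgβ, neg_smul]
      abel
    · rw [conj_s_apply hR hβ]
      have h2 : g⁻¹ (g β) = β := g.symm_apply_apply β
      rw [h2, hR.coroot_self β hβ]
      module
    · exact s_apply_self hR hgβ
    · intro γ hγ
      have h1 : g⁻¹ γ ∈ R.Φ := (hg.inv hR).maps_phi hR hγ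
      have h2 : R.s β (g⁻¹ γ) ∈ R.Φ := s_maps_phi hR hβ h1
      exact hg.maps_phi hR h2
    · intro γ hγ
      exact s_maps_phi hR hgβ hγ
    · exact s_mul_self hR hgβ
  have := congrArg (fun (f : R.Aut) => f v) key
  rw [conj_s_apply hR hβ, s_apply hR hgβ] at this
  have h3 : R.coroot β (g⁻¹ v) • (g β) = R.coroot (g β) v • (g β) := by
    linear_combination (norm := module) - this
  exact (smul_eq_smul_cancel hgβ0 h3).symm

lemma coroot_smul_root (hR : R.IsRootSystem) {β : R.V} (hβ : β ∈ R.Φ) {c : ℚ} (hc : 0 < c)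
    (hcβ : c • β ∈ R.Φ) (v : R.V) : R.coroot (c • β) v = c⁻¹ * R.coroot β v := by
  have hβ0 : β ≠ 0 := hR.ne_zero _ hβ
  have key : R.s β = R.s (c • β) := by
    apply refl_unique hR hcβ
    · intro v
      refine ⟨-(R.coroot β v) * c⁻¹, ?_⟩
      rw [s_apply hR hβ, smul_smul]
      have hcc : -(R.coroot β v) * c⁻¹ * c = -(R.coroot β v) := by field_simp
      rw [hcc]
      module
    · intro v
      exact ⟨-(R.coroot (c • β) v), by rw [s_apply hR hcβ, neg_smul]; abel⟩
    · rw [map_smul, s_apply_self hR hβ, smul_neg]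
    · exact s_apply_self hR hcβ
    · intro γ hγ; exact s_maps_phi hR hβ hγ
    · intro γ hγ; exact s_maps_phi hR hcβ hγ
    · exact s_mul_self hR hcβ
  have := congrArg (fun (f : R.Aut) => f v) key
  rw [s_apply hR hβ, s_apply hR hcβ] at this
  have h3 : R.coroot β v • β = (R.coroot (c • β) v * c) • β := by
    linear_combination (norm := module) - this
  have h4 := smul_eq_smul_cancel hβ0 h3
  field_simp
  linarith [h4]

end Aux5

end RootData
namespace RootData

section Aux6

variable {R : RootData}

lemma trace_grows (T : ℚ) (hT : 2 < |T|) (t : ℕ → ℚ) (h0 : t 0 = 2) (h1 : t 1 = T)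
    (hrec : ∀ n, t (n + 2) = T * t (n + 1) - t n) :
    ∀ n, 2 ≤ |t n| ∧ |t n| + (|T| - 2) ≤ |t (n + 1)| := by
  intro n
  induction n with
  | zero =>
      constructor
      · rw [h0]; norm_num
      · rw [h0, h1]; norm_num
  | succ n ih =>
      obtain ⟨ih1, ih2⟩ := ih
      have h2 : 2 ≤ |t (n + 1)| := by linarith [abs_nonneg T]
      refine ⟨h2, ?_⟩
      have h3 : |T * t (n + 2 - 1)| - |t n| ≤ |T * t (n + 1) - t n| := by
        have := abs_sub_abs_le_abs_sub (T * t (n + 1)) (t n)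
        simpa using this
      have h4 : |T * t (n + 1)| = |T| * |t (n + 1)| := abs_mul _ _
      have h5 := hrec n
      have h6 : |t (n + 2)| = |T * t (n + 1) - t n| := by rw [h5]
      have h7 : |t n| ≤ |t (n + 1)| := by linarith [abs_nonneg T]
      simp only [show n + 2 - 1 = n + 1 from rfl] at h3
      nlinarith [abs_nonneg (t (n+1))]

lemma trace_big (T : ℚ) (hT : 2 < |T|) (t : ℕ → ℚ) (h0 : t 0 = 2) (h1 : t 1 = T)
    (hrec : ∀ n, t (n + 2) = T * t (n + 1) - t n) :
    ∀ n, 1 ≤ n → 2 < |t n| := by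
  intro n hn
  obtain ⟨m, rfl⟩ := Nat.exists_eq_add_of_le hn
  induction m with
  | zero => simpa [h1] using hT
  | succ m ih =>
      have h2 := (trace_grows T hT t h0 h1 hrec (1 + m)).2
      have h3 : 1 + (m + 1) = (1 + m) + 1 := by ring
      rw [h3]
      have := ih (by omega)
      linarith

lemma sign_agreement (hR : R.IsRootSystem) {β γ : R.V} (hβ : β ∈ R.Φ) (hγ : γ ∈ R.Φ)
    (huniq : ∀ a b : ℚ, a • β + b • γ = 0 → a = 0 ∧ b = 0)
    (hp : 0 < R.coroot γ β) : 0 < R.coroot β γ := by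
  set p : ℚ := R.coroot γ β with hpdef
  set q : ℚ := R.coroot β γ with hqdef
  set g : R.Aut := R.s γ * R.s β with hgdef
  have hgb : g β = -β + p • γ := by
    rw [hgdef, mul_app, s_apply_self hR hβ, map_neg, s_apply hR hγ, ← hpdef]
    module
  have hgc : g γ = (-q) • β + (p * q - 1) • γ := by
    rw [hgdef, mul_app, s_apply hR hβ, ← hqdef, map_sub, map_smul, s_apply hR hγ,
      s_apply hR hγ, ← hpdef]
    rw [hR.coroot_self γ hγ]
    module
  -- matrix entries of powers of g on the plane
  set M : ℕ → (ℚ × ℚ) × (ℚ × ℚ) := fun n => Nat.rec (((1:ℚ),(0:ℚ)),((0:ℚ),(1:ℚ)))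
    (fun _ st => ((-st.1.1 - q*st.1.2, p*st.1.1 + (p*q-1)*st.1.2),
                  (-st.2.1 - q*st.2.2, p*st.2.1 + (p*q-1)*st.2.2))) n with hMdef
  have hM0 : M 0 = (((1:ℚ),(0:ℚ)),((0:ℚ),(1:ℚ))) := rfl
  have hMs : ∀ m, M (m+1) = ((-(M m).1.1 - q*(M m).1.2, p*(M m).1.1 + (p*q-1)*(M m).1.2),
                  (-(M m).2.1 - q*(M m).2.2, p*(M m).2.1 + (p*q-1)*(M m).2.2)) := fun m => rfl
  have hrep : ∀ n, (g^n) β = (M n).1.1 • β + (M n).1.2 • γ ∧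
      (g^n) γ = (M n).2.1 • β + (M n).2.2 • γ := by
    intro n
    induction n with
    | zero =>
        rw [hM0]
        constructor
        · rw [pow_zero, one_app]; module
        · rw [pow_zero, one_app]; module
    | succ n ih =>
        obtain ⟨ih1, ih2⟩ := ih
        have hp1 : (g^(n+1)) β = g ((g^n) β) := by rw [pow_succ']; rfl
        have hp2 : (g^(n+1)) γ = g ((g^n) γ) := by rw [pow_succ']; rfl
        rw [hMs n]
        constructor
        · rw [hp1, ih1, map_add, map_smul, map_smul, hgb, hgc]
          module
        · rw [hp2, ih2, map_add, map_smul, map_smul, hgb, hgc]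
          module
  -- finite order
  have hgΦ : ∀ δ ∈ R.Φ, g δ ∈ R.Φ := by
    intro δ hδ
    rw [hgdef, mul_app]
    exact s_maps_phi hR hγ (s_maps_phi hR hβ hδ)
  obtain ⟨n, hn, hfix⟩ := finite_order_on_phi hR g hgΦ
  -- identity entries at any multiple fix point
  have hid : ∀ m, (g^m) β = β → (g^m) γ = γ →
      (M m).1.1 = 1 ∧ (M m).1.2 = 0 ∧ (M m).2.1 = 0 ∧ (M m).2.2 = 1 := by
    intro m hfb hfc
    obtain ⟨h1, h2⟩ := hrep m
    rw [hfb] at h1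
    rw [hfc] at h2
    have e1 : ((M m).1.1 - 1) • β + (M m).1.2 • γ = 0 := by
      linear_combination (norm := module) - h1
    have e2 : (M m).2.1 • β + ((M m).2.2 - 1) • γ = 0 := by
      linear_combination (norm := module) - h2
    obtain ⟨f1, f2⟩ := huniq _ _ e1
    obtain ⟨f3, f4⟩ := huniq _ _ e2
    refine ⟨by linarith, f2, f3, by linarith⟩
  by_contra hq
  push_neg at hq
  rcases eq_or_lt_of_le hq with hq0 | hqneg
  · -- q = 0 case
    have hq0' : q = 0 := hq0
    have heven : ∀ k, M (2*k) = ((1, -(2*(k:ℚ))*p),(0,1)) ∧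
        M (2*k+1) = ((-1, (2*(k:ℚ)+1)*p),(0,-1)) := by
      intro k
      induction k with
      | zero =>
          constructor
          · rw [show 2*0 = 0 from rfl, hM0]; norm_num
          · rw [show 2*0+1 = 0+1 from rfl, hMs 0, hM0]
            simp only [Prod.mk.injEq]
            norm_num [hq0']
      | succ k ih =>
          obtain ⟨ih1, ih2⟩ := ih
          have e1 : 2*(k+1) = (2*k+1)+1 := by ring
          have e2 : 2*(k+1)+1 = ((2*k+1)+1)+1 := by ring
          constructor
          · rw [e1, hMs (2*k+1), ih2, hq0']
            simp only [Prod.mk.injEq]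
            push_cast
            constructor
            · constructor <;> ring
            · constructor <;> ring
          · rw [e2, hMs (2*k+1+1), hMs (2*k+1), ih2, hq0']
            simp only [Prod.mk.injEq]
            push_cast
            constructor
            · constructor <;> ring
            · constructor <;> ring
    have hfix2 : (g^(2*n)) β = β ∧ (g^(2*n)) γ = γ := by
      have hb := hfix β hβ
      have hc := hfix γ hγ
      have e : g^(2*n) = g^n * g^n := by rw [two_mul, pow_add]
      constructor
      · rw [e]; show (g^n) ((g^n) β) = β; rw [hb, hb]
      · rw [e]; show (g^n) ((g^n) γ) = γ; rw [hc, hc]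
    obtain ⟨i1, i2, _, _⟩ := hid (2*n) hfix2.1 hfix2.2
    have := (heven n).1
    rw [this] at i2
    simp only at i2
    have hp0 : p = 0 := by
      have h2 : -(2*(n:ℚ))*p = 0 := i2
      have h3 : (2*(n:ℚ)) * p = 0 := by linarith
      rcases mul_eq_zero.mp h3 with h | h
      · have : (0:ℚ) < 2*(n:ℚ) := by positivity
        exact absurd h this.ne'
      · exact h
    linarith
  · -- q < 0 case
    set T : ℚ := p*q - 2 with hTdef
    have hT : 2 < |T| := by
      have : p * q < 0 := mul_neg_of_pos_of_neg hp hqneg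
      rw [abs_of_neg (by linarith)]
      linarith
    set t : ℕ → ℚ := fun m => (M m).1.1 + (M m).2.2 with htdef
    have ht0 : t 0 = 2 := by
      show (M 0).1.1 + (M 0).2.2 = 2
      rw [hM0]
      norm_num
    have ht1 : t 1 = T := by
      show (M 1).1.1 + (M 1).2.2 = T
      rw [show (1:ℕ) = 0 + 1 from rfl, hMs 0, hM0, hTdef]
      push_cast
      ring
    have htrec : ∀ m, t (m+2) = T * t (m+1) - t m := by
      intro m
      show (M (m+2)).1.1 + (M (m+2)).2.2 =
        T * ((M (m+1)).1.1 + (M (m+1)).2.2) - ((M m).1.1 + (M m).2.2)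
      rw [show m+2 = (m+1)+1 from rfl, hMs (m+1), hMs m, hTdef]
      ring
    have := trace_big T hT t ht0 ht1 htrec n hn
    obtain ⟨i1, _, _, i4⟩ := hid n (hfix β hβ) (hfix γ hγ)
    rw [htdef] at this
    simp only [i1, i4] at this
    norm_num at this

end Aux6

end RootData
namespace RootData

section Aux7

variable {R : RootData}

/-- height of a root -/
noncomputable def ht (hR : R.IsRootSystem) (β : R.V) : ℚ := ∑ i, (basis hR).repr β i

/-- number of positive roots of smaller height -/
noncomputable def meas (hR : R.IsRootSystem) (γ : R.V) : ℕ :=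
  ((hR.finite.subset hR.pos_subset).toFinset.filter (fun β => ht hR β < ht hR γ)).card

lemma repr_simple_ne (hR : R.IsRootSystem) {j k : Fin R.r} (hk : k ≠ j) :
    (basis hR).repr (R.α j) k = 0 := by
  rw [← basis_apply hR j, Module.Basis.repr_self, Finsupp.single_apply, if_neg (fun h => hk h.symm)]

lemma repr_simple_self (hR : R.IsRootSystem) (j : Fin R.r) :
    (basis hR).repr (R.α j) j = 1 := by
  rw [← basis_apply hR j, Module.Basis.repr_self, Finsupp.single_apply, if_pos rfl]

lemma ht_simple (hR : R.IsRootSystem) (j : Fin R.r) : ht hR (R.α j) = 1 := by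
  rw [ht, ← basis_apply hR j]
  simp [Module.Basis.repr_self, Finsupp.single_apply]

lemma repr_sub_smul (hR : R.IsRootSystem) (γ : R.V) (q : ℚ) (j : Fin R.r) (k : Fin R.r) :
    (basis hR).repr (γ - q • R.α j) k = (basis hR).repr γ k - q * (basis hR).repr (R.α j) k := by
  rw [map_sub, map_smul]
  simp

lemma ht_sub_smul (hR : R.IsRootSystem) (γ : R.V) (q : ℚ) (j : Fin R.r) :
    ht hR (γ - q • R.α j) = ht hR γ - q := by
  rw [ht]
  have h1 : ∀ k, (basis hR).repr (γ - q • R.α j) k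
      = (basis hR).repr γ k - q * (basis hR).repr (R.α j) k := repr_sub_smul hR γ q j
  rw [Finset.sum_congr rfl (fun k _ => h1 k), Finset.sum_sub_distrib, ← Finset.mul_sum]
  have h2 : ∑ k, (basis hR).repr (R.α j) k = 1 := ht_simple hR j
  rw [h2, mul_one]
  rfl

lemma sum_repr (hR : R.IsRootSystem) (γ : R.V) : ∑ i, (basis hR).repr γ i • R.α i = γ := by
  have := (basis hR).sum_repr γ
  simpa [basis_apply hR] using this

lemma coroot_pos_step (hR : R.IsRootSystem) {lam : R.V} (hlam : R.Dominant lam)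
    {γ : R.V} (hγ : γ ∈ R.pos)
    (IH : ∀ γ'' , γ'' ∈ R.pos → meas hR γ'' < meas hR γ → 0 ≤ R.coroot γ'' lam) :
    0 ≤ R.coroot γ lam := by
  have hγΦ : γ ∈ R.Φ := hR.pos_subset hγ
  have h2 : R.coroot γ γ = 2 := hR.coroot_self γ hγΦ
  have hsum : R.coroot γ γ = ∑ i, (basis hR).repr γ i * R.coroot γ (R.α i) := by
    have e : R.coroot γ γ = R.coroot γ (∑ i, (basis hR).repr γ i • R.α i) := by
      rw [sum_repr hR γ]
    rw [e, map_sum]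
    congr 1
    ext i
    rw [map_smul, smul_eq_mul]
  have hex : ∃ j, 0 < (basis hR).repr γ j * R.coroot γ (R.α j) := by
    by_contra hno
    push_neg at hno
    have : (2:ℚ) ≤ 0 := by
      rw [← h2, hsum]
      exact Finset.sum_nonpos (fun i _ => hno i)
    linarith
  obtain ⟨j, hj⟩ := hex
  have hcj : 0 ≤ (basis hR).repr γ j := pos_repr_nonneg hR hγ j
  have hcjpos : 0 < (basis hR).repr γ j := by
    rcases eq_or_lt_of_le hcj with h | h
    · rw [← h] at hj; simp at hj
    · exact h
  have hp : 0 < R.coroot γ (R.α j) := by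
    by_contra h
    push_neg at h
    nlinarith
  by_cases hcase : ∀ k, k ≠ j → (basis hR).repr γ k = 0
  · -- γ is a positive multiple of α j
    have hγeq : γ = (basis hR).repr γ j • R.α j := by
      conv_lhs => rw [← sum_repr hR γ]
      rw [Finset.sum_eq_single j]
      · intro k _ hk
        rw [hcase k hk, zero_smul]
      · intro h
        exact absurd (Finset.mem_univ j) h
    have : R.coroot γ lam = ((basis hR).repr γ j)⁻¹ * R.coroot (R.α j) lam := by
      conv_lhs => rw [hγeq]
      exact coroot_smul_root hR (hR.simple_mem j) hcjpos (hγeq ▸ hγΦ) lam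
    rw [this]
    have := hlam j
    positivity
  · push_neg at hcase
    obtain ⟨k, hkj, hk0⟩ := hcase
    have hkpos : 0 < (basis hR).repr γ k :=
      lt_of_le_of_ne (pos_repr_nonneg hR hγ k) (Ne.symm hk0)
    -- uniqueness of combinations of α j and γ
    have huniq : ∀ a b : ℚ, a • R.α j + b • γ = 0 → a = 0 ∧ b = 0 := by
      intro a b hab
      have h3 : (basis hR).repr (a • R.α j + b • γ) k = 0 := by rw [hab, map_zero]; rfl
      rw [map_add, map_smul, map_smul] at h3
      simp only [Finsupp.coe_add, Finsupp.coe_smul, Pi.add_apply, Pi.smul_apply,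
        smul_eq_mul] at h3
      rw [repr_simple_ne hR hkj] at h3
      have hb : b = 0 := by
        have := hkpos
        rcases mul_eq_zero.mp (by linarith : b * (basis hR).repr γ k = 0) with h | h
        · exact h
        · linarith
      refine ⟨?_, hb⟩
      rw [hb, zero_smul, add_zero] at hab
      have := smul_cancel_ne (hR.ne_zero _ (hR.simple_mem j)) hab
      exact this
    have hq : 0 < R.coroot (R.α j) γ := sign_agreement hR (hR.simple_mem j) hγΦ huniq hp
    set q : ℚ := R.coroot (R.α j) γ with hqdef
    set γ' : R.V := γ - q • R.α j with hγ'def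
    have hγ'Φ : γ' ∈ R.Φ := hR.reflection_stable _ (hR.simple_mem j) γ hγΦ
    have hγ'k : 0 < (basis hR).repr γ' k := by
      rw [hγ'def, repr_sub_smul hR, repr_simple_ne hR hkj, mul_zero, sub_zero]
      exact hkpos
    have hγ'pos : γ' ∈ R.pos := pos_of_repr_pos hR hγ'Φ k hγ'k
    have hht : ht hR γ' = ht hR γ - q := ht_sub_smul hR γ q j
    have hmeas : meas hR γ' < meas hR γ := by
      apply Finset.card_lt_card
      constructor
      · intro β hβ
        simp only [Finset.mem_filter] at hβ ⊢
        exact ⟨hβ.1, by rw [hht] at hβ; linarith [hβ.2]⟩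
      · intro hsub
        have hγ'mem : γ' ∈ (hR.finite.subset hR.pos_subset).toFinset.filter
            (fun β => ht hR β < ht hR γ) := by
          simp only [Finset.mem_filter, Set.Finite.mem_toFinset]
          exact ⟨hγ'pos, by rw [hht]; linarith⟩
        have := hsub hγ'mem
        simp only [Finset.mem_filter] at this
        rw [hht] at this
        linarith [this.2]
    have hIH := IH γ' hγ'pos hmeas
    -- now relate coroot γ to coroot γ'
    have hSj : R.S j γ = γ' := by
      rw [S_apply hR, hγ'def, hqdef]
    have hSjinv : (R.S j)⁻¹ = R.S j := S_inv hR j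
    have hcor1 : ∀ v, R.coroot γ' v = R.coroot γ (R.S j v) := by
      intro v
      rw [← hSj]
      have := coroot_equivariant hR (Ex.S j) hγΦ v
      rw [this, hSjinv]
    have hcor2 : R.coroot γ' (R.α j) = - R.coroot γ (R.α j) := by
      rw [hcor1, S_apply hR, hR.coroot_self _ (hR.simple_mem j)]
      have : R.α j - (2:ℚ) • R.α j = - R.α j := by module
      rw [this, map_neg]
    have hSlam : R.S j lam = lam - R.coroot (R.α j) lam • R.α j := S_apply hR j lam
    have hfinal : R.coroot γ lam = R.coroot γ' lam + R.coroot (R.α j) lam * R.coroot γ (R.α j) := by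
      have h4 : R.coroot γ' (R.S j lam) = R.coroot γ (R.S j (R.S j lam)) := hcor1 _
      have h5 : R.S j (R.S j lam) = lam := by
        have := S_mul_self hR j
        calc R.S j (R.S j lam) = (R.S j * R.S j) lam := rfl
          _ = lam := by rw [this]; rfl
      rw [h5] at h4
      rw [← h4, hSlam, map_sub, map_smul, hcor2, smul_eq_mul]
      ring
    rw [hfinal]
    have := hlam j
    nlinarith

lemma coroot_pos_dominant (hR : R.IsRootSystem) {lam : R.V} (hlam : R.Dominant lam)
    {γ : R.V} (hγ : γ ∈ R.pos) : 0 ≤ R.coroot γ lam := by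
  have key : ∀ (N : ℕ) (δ : R.V), δ ∈ R.pos → meas hR δ ≤ N → 0 ≤ R.coroot δ lam := by
    intro N
    induction N with
    | zero =>
        intro δ hδ hm
        apply coroot_pos_step hR hlam hδ
        intro γ'' _ hc
        omega
    | succ N ih =>
        intro δ hδ hm
        apply coroot_pos_step hR hlam hδ
        intro γ'' h1 h2
        exact ih γ'' h1 (by omega)
  exact key (meas hR γ) γ hγ le_rfl

end Aux7

end RootData
namespace RootData

section Aux8

variable {R : RootData}

lemma apply_inv_apply (g : R.Aut) (v : R.V) : g (g⁻¹ v) = v := g.apply_symm_apply v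
lemma inv_apply_apply (g : R.Aut) (v : R.V) : g⁻¹ (g v) = v := g.symm_apply_apply v

/-- reflection along a positive root -/
def IsRefl (R : RootData) (γ : R.V) (t : R.Aut) : Prop :=
  γ ∈ R.pos ∧ R.Ex t ∧ t * t = 1 ∧ t γ = -γ ∧
    (∀ v, ∃ c : ℚ, t v - v = c • γ) ∧ (∀ β ∈ R.Φ, t β ∈ R.Φ)

lemma isRefl_S (hR : R.IsRootSystem) (i : Fin R.r) : R.IsRefl (R.α i) (R.S i) := by
  refine ⟨hR.simple_pos i, Ex.S i, S_mul_self hR i, s_apply_self hR (hR.simple_mem i), ?_, ?_⟩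
  · intro v
    exact ⟨-(R.coroot (R.α i) v), by rw [S_apply hR, neg_smul]; abel⟩
  · intro β hβ
    rw [S_apply hR]
    exact hR.reflection_stable _ (hR.simple_mem i) _ hβ

lemma IsRefl.phi (hR : R.IsRootSystem) {γ : R.V} {t : R.Aut} (h : R.IsRefl γ t) : γ ∈ R.Φ :=
  hR.pos_subset h.1

lemma IsRefl.conj_pos (hR : R.IsRootSystem) {γ : R.V} {t : R.Aut} (h : R.IsRefl γ t)
    {g : R.Aut} (hg : R.Ex g) (hpos : g γ ∈ R.pos) : R.IsRefl (g γ) (g * t * g⁻¹) := by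
  obtain ⟨h1, h2, h3, h4, h5, h6⟩ := h
  refine ⟨hpos, (hg.mul h2).mul (hg.inv hR), ?_, ?_, ?_, ?_⟩
  · calc g * t * g⁻¹ * (g * t * g⁻¹) = g * (t * t) * g⁻¹ := by group
      _ = 1 := by rw [h3]; group
  · have e1 : (g * t * g⁻¹) (g γ) = g (t γ) := by
      show g (t (g⁻¹ (g γ))) = g (t γ)
      rw [inv_apply_apply g]
    rw [e1, h4, map_neg]
  · intro v
    obtain ⟨c, hc⟩ := h5 (g⁻¹ v)
    refine ⟨c, ?_⟩
    have e1 : (g * t * g⁻¹) v - v = g (t (g⁻¹ v) - g⁻¹ v) := by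
      show g (t (g⁻¹ v)) - v = _
      rw [map_sub, apply_inv_apply g]
    rw [e1, hc, map_smul]
  · intro β hβ
    have hb1 : g⁻¹ β ∈ R.Φ := (hg.inv hR).maps_phi hR hβ
    exact hg.maps_phi hR (h6 _ hb1)

lemma IsRefl.conj_neg (hR : R.IsRootSystem) {γ : R.V} {t : R.Aut} (h : R.IsRefl γ t)
    {g : R.Aut} (hg : R.Ex g) (hneg : -(g γ) ∈ R.pos) : R.IsRefl (-(g γ)) (g * t * g⁻¹) := by
  obtain ⟨h1, h2, h3, h4, h5, h6⟩ := h
  refine ⟨hneg, (hg.mul h2).mul (hg.inv hR), ?_, ?_, ?_, ?_⟩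
  · calc g * t * g⁻¹ * (g * t * g⁻¹) = g * (t * t) * g⁻¹ := by group
      _ = 1 := by rw [h3]; group
  · have e1 : (g * t * g⁻¹) (g γ) = g (t γ) := by
      show g (t (g⁻¹ (g γ))) = g (t γ)
      rw [inv_apply_apply g]
    rw [map_neg, e1, h4, map_neg, neg_neg]
  · intro v
    obtain ⟨c, hc⟩ := h5 (g⁻¹ v)
    refine ⟨-c, ?_⟩
    have e1 : (g * t * g⁻¹) v - v = g (t (g⁻¹ v) - g⁻¹ v) := by
      show g (t (g⁻¹ v)) - v = _
      rw [map_sub, apply_inv_apply g]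
    rw [e1, hc, map_smul, neg_smul, smul_neg, neg_neg]
  · intro β hβ
    have hb1 : g⁻¹ β ∈ R.Φ := (hg.inv hR).maps_phi hR hβ
    exact hg.maps_phi hR (h6 _ hb1)

lemma pos_to_neg_simple (hR : R.IsRootSystem) {η : R.V} (hη : η ∈ R.pos) (i : Fin R.r)
    (hneg : -(R.S i η) ∈ R.pos) : ∃ c : ℚ, 0 < c ∧ η = c • R.α i := by
  have hηΦ : η ∈ R.Φ := hR.pos_subset hη
  have hkey : ∀ k, k ≠ i → (basis hR).repr η k = 0 := by
    intro k hk
    have h1 : 0 ≤ (basis hR).repr η k := pos_repr_nonneg hR hη k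
    have h2 : 0 ≤ (basis hR).repr (-(R.S i η)) k := pos_repr_nonneg hR hneg k
    have h3 : R.S i η = η - R.coroot (R.α i) η • R.α i := S_apply hR i η
    rw [h3, map_neg, map_sub] at h2
    simp only [Finsupp.coe_neg, Finsupp.coe_sub, Pi.neg_apply, Pi.sub_apply] at h2
    rw [map_smul] at h2
    simp only [Finsupp.coe_smul, Pi.smul_apply, smul_eq_mul] at h2
    rw [repr_simple_ne hR hk] at h2
    -- h2 : 0 ≤ -((basis hR).repr η k - coroot * 0)
    have : (basis hR).repr η k ≤ 0 := by linarith [h2]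
    linarith
  have hsum := sum_repr hR η
  have hη2 : η = (basis hR).repr η i • R.α i := by
    conv_lhs => rw [← hsum]
    rw [Finset.sum_eq_single i]
    · intro k _ hk
      rw [hkey k hk, zero_smul]
    · intro h
      exact absurd (Finset.mem_univ i) h
  refine ⟨(basis hR).repr η i, ?_, hη2⟩
  rcases lt_or_ge 0 ((basis hR).repr η i) with h | h
  · exact h
  · exfalso
    have h0 : (basis hR).repr η i = 0 := le_antisymm (by linarith) (pos_repr_nonneg hR hη i)
    rw [h0, zero_smul] at hη2
    exact hR.ne_zero η hηΦ hη2

lemma neg_mem_phi_cases (hR : R.IsRootSystem) {g : R.Aut} (hg : R.Ex g) {γ : R.V}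
    (hγ : γ ∈ R.Φ) : g γ ∈ R.pos ∨ -(g γ) ∈ R.pos :=
  phi_dichotomy hR (hg.maps_phi hR hγ)

lemma strong_exchange (hR : R.IsRootSystem) :
    ∀ (l : List (Fin R.r)) (γ : R.V) (t : R.Aut), R.IsRefl γ t →
      -(R.wordProd l γ) ∈ R.pos →
      ∃ l', l'.Sublist l ∧ l'.length + 1 = l.length ∧ R.wordProd l' = R.wordProd l * t := by
  intro l
  induction l with
  | nil =>
      intro γ t ht hneg
      rw [wordProd_nil, one_app] at hneg
      exact absurd (not_pos_and_neg hR (ht.phi hR) ht.1 hneg) (fun h => h)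
  | cons i l' ih =>
      intro γ t ht hneg
      set u := R.wordProd l' with hu
      have hEx : R.Ex u := ⟨l', rfl⟩
      rcases neg_mem_phi_cases hR hEx (ht.phi hR) with hpos | hneg'
      · -- u γ positive, S i (u γ) negative: break at the head
        have hSneg : -(R.S i (u γ)) ∈ R.pos := by
          have : R.wordProd (i :: l') γ = R.S i (u γ) := by rw [wordProd_cons]; rfl
          rw [this] at hneg
          exact hneg
        obtain ⟨c, hc, hceq⟩ := pos_to_neg_simple hR hpos i hSneg
        -- u * t * u⁻¹ = S i
        have hconj : R.IsRefl (u γ) (u * t * u⁻¹) := ht.conj_pos hR hEx hpos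
        obtain ⟨k1, k2, k3, k4, k5, k6⟩ := hconj
        have hkey : u * t * u⁻¹ = R.S i := by
          apply refl_unique hR (hR.simple_mem i)
          · intro v
            obtain ⟨d, hd⟩ := k5 v
            exact ⟨d * c, by rw [hd, hceq, smul_smul]⟩
          · intro v
            exact ⟨-(R.coroot (R.α i) v), by rw [S_apply hR, neg_smul]; abel⟩
          · -- (u t u⁻¹) (α i) = - α i
            have h4 : (u * t * u⁻¹) (c • R.α i) = -(c • R.α i) := by rw [← hceq, k4, hceq]
            rw [map_smul, ← smul_neg] at h4
            have := smul_right_injective R.V hc.ne' h4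
            exact this
          · exact s_apply_self hR (hR.simple_mem i)
          · exact k6
          · intro β hβ
            rw [S_apply hR]
            exact hR.reflection_stable _ (hR.simple_mem i) _ hβ
          · exact S_mul_self hR i
        refine ⟨l', List.sublist_cons_self i l', by simp, ?_⟩
        have : R.S i * u * t = u := by
          have e1 : u * t = R.S i * u := by
            calc u * t = (u * t * u⁻¹) * u := by group
              _ = R.S i * u := by rw [hkey]
          rw [mul_assoc, e1, ← mul_assoc, S_mul_self hR, one_mul]
        rw [wordProd_cons, mul_assoc, ← hu]
        calc u = R.S i * u * t := this.symm
          _ = R.S i * (u * t) := by rw [mul_assoc]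
      · -- recurse
        obtain ⟨l'', hsub, hlen, hprod⟩ := ih γ t ht hneg'
        refine ⟨i :: l'', List.Sublist.cons₂ i hsub, by simp [← hlen], ?_⟩
        rw [wordProd_cons, wordProd_cons, hprod, mul_assoc, ← hu]

lemma len_lt_of_neg (hR : R.IsRootSystem) {g : R.Aut} {γ : R.V} {t : R.Aut} (hg : R.Ex g)
    (ht : R.IsRefl γ t) (hneg : -(g γ) ∈ R.pos) : R.len (g * t) < R.len g := by
  obtain ⟨l, hred, hprod, hlen⟩ := exists_reduced_word hg
  obtain ⟨l', hsub, hl, hp⟩ := strong_exchange hR l γ t ht (by rw [hprod]; exact hneg)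
  have h1 : R.len (g * t) ≤ l'.length := len_le (by rw [hp, hprod])
  omega

lemma len_gt_of_pos (hR : R.IsRootSystem) {g : R.Aut} {γ : R.V} {t : R.Aut} (hg : R.Ex g)
    (ht : R.IsRefl γ t) (hpos : g γ ∈ R.pos) : R.len g < R.len (g * t) := by
  have h1 : -((g * t) γ) ∈ R.pos := by
    have e1 : (g * t) γ = g (t γ) := rfl
    rw [e1, ht.2.2.2.1, map_neg, neg_neg]
    exact hpos
  have h2 := len_lt_of_neg hR (hg.mul ht.2.1) ht h1
  have e2 : g * t * t = g := by rw [mul_assoc, ht.2.2.1, mul_one]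
  rw [e2] at h2
  exact h2

end Aux8

end RootData
namespace RootData

section Aux9

variable {R : RootData}

/-- a Bruhat covering-ish step -/
def Step (R : RootData) (g h : R.Aut) : Prop :=
  R.Ex g ∧ ∃ γ t, R.IsRefl γ t ∧ h = g * t ∧ R.len g < R.len h

/-- the Bruhat order as transitive closure of steps -/
def Bru (R : RootData) : R.Aut → R.Aut → Prop := Relation.ReflTransGen R.Step

lemma IsRefl.inv_eq {γ : R.V} {t : R.Aut} (h : R.IsRefl γ t) : t⁻¹ = t := by
  rw [inv_eq_iff_mul_eq_one, h.2.2.1]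

lemma Step.ex_left {g h : R.Aut} (h1 : R.Step g h) : R.Ex g := h1.1

lemma Step.ex_right {g h : R.Aut} (h1 : R.Step g h) : R.Ex h := by
  obtain ⟨hg, γ, t, ht, rfl, _⟩ := h1
  exact hg.mul ht.2.1

lemma Bru.refl (g : R.Aut) : R.Bru g g := Relation.ReflTransGen.refl

lemma Bru.trans {a b c : R.Aut} (h1 : R.Bru a b) (h2 : R.Bru b c) : R.Bru a c :=
  Relation.ReflTransGen.trans h1 h2

lemma Bru.single {a b : R.Aut} (h : R.Step a b) : R.Bru a b :=
  Relation.ReflTransGen.single h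

lemma Bru.ex {g h : R.Aut} (hb : R.Bru g h) (hg : R.Ex g) : R.Ex h := by
  induction hb with
  | refl => exact hg
  | tail _ hstep ih => exact hstep.ex_right

lemma Bru.len_le {g h : R.Aut} (hb : R.Bru g h) : R.len g ≤ R.len h := by
  induction hb with
  | refl => exact le_rfl
  | tail _ hstep ih =>
      obtain ⟨_, γ, t, _, rfl, hlt⟩ := hstep
      omega

lemma Bru.eq_of_len_ge {g h : R.Aut} (hb : R.Bru g h) (hlen : R.len h ≤ R.len g) : g = h := by
  induction hb with
  | refl => rfl
  | tail hby hstep ih =>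
      obtain ⟨_, γ, t, _, heq, hlt⟩ := hstep
      have := Bru.len_le (R := R) hby
      omega

lemma step_of_pos (hR : R.IsRootSystem) {g : R.Aut} (hg : R.Ex g) {γ : R.V} {t : R.Aut}
    (ht : R.IsRefl γ t) (hpos : g γ ∈ R.pos) : R.Step g (g * t) :=
  ⟨hg, γ, t, ht, rfl, len_gt_of_pos hR hg ht hpos⟩

lemma step_of_neg (hR : R.IsRootSystem) {g : R.Aut} (hg : R.Ex g) {γ : R.V} {t : R.Aut}
    (ht : R.IsRefl γ t) (hneg : -(g γ) ∈ R.pos) : R.Step (g * t) g := by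
  refine ⟨hg.mul ht.2.1, γ, t, ht, ?_, ?_⟩
  · rw [mul_assoc, ht.2.2.1, mul_one]
  · exact len_lt_of_neg hR hg ht hneg

lemma Step.inv (hR : R.IsRootSystem) {g h : R.Aut} (hs : R.Step g h) : R.Step g⁻¹ h⁻¹ := by
  obtain ⟨hg, γ, t, ht, rfl, hlt⟩ := hs
  have hEx : R.Ex (g * t) := hg.mul ht.2.1
  have hinv : (g * t)⁻¹ = g⁻¹ * (g * t * g⁻¹) := by
    rw [mul_inv_rev, ht.inv_eq]
    group
  refine ⟨hg.inv hR, ?_⟩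
  have hlen : R.len g⁻¹ < R.len (g * t)⁻¹ := by
    rw [len_inv hR hg, len_inv hR hEx]
    exact hlt
  rcases neg_mem_phi_cases hR hg (ht.phi hR) with hp | hn
  · exact ⟨g γ, g * t * g⁻¹, ht.conj_pos hR hg hp, hinv, hlen⟩
  · exact ⟨-(g γ), g * t * g⁻¹, ht.conj_neg hR hg hn, hinv, hlen⟩

lemma Bru.inv (hR : R.IsRootSystem) {g h : R.Aut} (hb : R.Bru g h) : R.Bru g⁻¹ h⁻¹ := by
  induction hb with
  | refl => exact Bru.refl _
  | tail _ hstep ih => exact ih.tail (hstep.inv hR)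

lemma reduced_nil : R.Reduced ([] : List (Fin R.r)) := by
  rw [Reduced, wordProd_nil, len_one]
  rfl

lemma not_reduced_delete (hR : R.IsRootSystem) {l : List (Fin R.r)} (h : ¬ R.Reduced l) :
    ∃ l', l'.Sublist l ∧ l'.length + 2 = l.length ∧ R.wordProd l' = R.wordProd l := by
  induction l using List.reverseRecOn with
  | nil => exact absurd reduced_nil h
  | append_singleton l₀ i ih =>
      by_cases h0 : R.Reduced l₀
      · -- exchange at the end
        set g := R.wordProd l₀ with hgdef
        have hEx : R.Ex g := ⟨l₀, rfl⟩
        have hprod : R.wordProd (l₀ ++ [i]) = g * R.S i := by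
          rw [wordProd_append, wordProd_singleton]
        have hneg : -(g (R.α i)) ∈ R.pos := by
          rcases neg_mem_phi_cases hR hEx (hR.simple_mem i) with hp | hn
          · exfalso
            have h1 := len_gt_of_pos hR hEx (isRefl_S hR i) hp
            have h2 := len_mul_S_le hEx i
            have h3 : R.len (g * R.S i) = R.len g + 1 := by omega
            apply h
            rw [Reduced, hprod, h3, h0]
            simp
          · exact hn
        obtain ⟨l', hsub, hlen, hp⟩ := strong_exchange hR l₀ (R.α i) (R.S i)
          (isRefl_S hR i) hneg
        refine ⟨l', hsub.trans (by simp), by simp [← hlen], ?_⟩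
        rw [hp, hprod]
      · obtain ⟨l', hsub, hlen, hp⟩ := ih h0
        refine ⟨l' ++ [i], hsub.append (List.Sublist.refl [i]), by simp [← hlen], ?_⟩
        rw [wordProd_append, wordProd_append, hp]

lemma exists_reduced_sublist (hR : R.IsRootSystem) (m : List (Fin R.r)) :
    ∃ m', m'.Sublist m ∧ R.Reduced m' ∧ R.wordProd m' = R.wordProd m := by
  have key : ∀ (N : ℕ) (m : List (Fin R.r)), m.length ≤ N →
      ∃ m', m'.Sublist m ∧ R.Reduced m' ∧ R.wordProd m' = R.wordProd m := by
    intro N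
    induction N with
    | zero =>
        intro m hm
        rw [Nat.le_zero, List.length_eq_zero_iff] at hm
        subst hm
        exact ⟨[], List.Sublist.refl _, reduced_nil, rfl⟩
    | succ N ih =>
        intro m hm
        by_cases hred : R.Reduced m
        · exact ⟨m, List.Sublist.refl _, hred, rfl⟩
        · obtain ⟨l', hsub, hlen, hp⟩ := not_reduced_delete hR hred
          obtain ⟨m', hsub', hred', hp'⟩ := ih l' (by omega)
          exact ⟨m', hsub'.trans hsub, hred', by rw [hp', hp]⟩
  exact key m.length m le_rfl

lemma bru_subword (hR : R.IsRootSystem) {z g : R.Aut} (hb : R.Bru z g) :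
    ∀ l : List (Fin R.r), R.Reduced l → R.wordProd l = g →
      ∃ l', l'.Sublist l ∧ R.wordProd l' = z := by
  induction hb with
  | refl => exact fun l _ hp => ⟨l, List.Sublist.refl _, hp⟩
  | @tail y h hby hstep ih =>
      intro l hred hprod
      obtain ⟨hy, γ, t, ht, rfl, hlt⟩ := hstep
      have hEx : R.Ex (y * t) := hy.mul ht.2.1
      have hneg : -((y * t) γ) ∈ R.pos := by
        rcases neg_mem_phi_cases hR hEx (ht.phi hR) with hp | hn
        · exfalso
          have h1 := len_gt_of_pos hR hEx ht hp
          have e : y * t * t = y := by rw [mul_assoc, ht.2.2.1, mul_one]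
          rw [e] at h1
          omega
        · exact hn
      obtain ⟨l'', hsub, _, hp⟩ := strong_exchange hR l γ t ht (by rw [hprod]; exact hneg)
      have hpy : R.wordProd l'' = y := by
        rw [hp, hprod]
        rw [mul_assoc, ht.2.2.1, mul_one]
      obtain ⟨m', hsub', hred', hp'⟩ := exists_reduced_sublist hR l''
      obtain ⟨l₃, hsub₃, hp₃⟩ := ih m' hred' (by rw [hp', hpy])
      exact ⟨l₃, (hsub₃.trans hsub').trans hsub, hp₃⟩

end Aux9

end RootData
namespace RootData

section Aux10

variable {R : RootData}

lemma sublist_singleton_cases {e : List (Fin R.r)} {i : Fin R.r} (h : e.Sublist [i]) :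
    e = [] ∨ e = [i] := by
  rcases List.sublist_cons_iff.mp h with h1 | ⟨l', rfl, h2⟩
  · left; exact List.sublist_nil.mp h1
  · right; rw [List.sublist_nil.mp h2]

lemma pos_of_len_lt (hR : R.IsRootSystem) {g : R.Aut} (hg : R.Ex g) {i : Fin R.r}
    (h : R.len g < R.len (g * R.S i)) : g (R.α i) ∈ R.pos := by
  rcases neg_mem_phi_cases hR hg (hR.simple_mem i) with hp | hn
  · exact hp
  · exfalso
    have := len_lt_of_neg hR hg (isRefl_S hR i) hn
    omega

lemma step_S_up (hR : R.IsRootSystem) {g : R.Aut} (hg : R.Ex g) {i : Fin R.r}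
    (h : R.len g < R.len (g * R.S i)) : R.Step g (g * R.S i) :=
  ⟨hg, R.α i, R.S i, isRefl_S hR i, rfl, h⟩

lemma step_S_down (hR : R.IsRootSystem) {g : R.Aut} (hg : R.Ex g) {i : Fin R.r}
    (h : R.len (g * R.S i) < R.len g) : R.Step (g * R.S i) g := by
  refine ⟨hg.mul (Ex.S i), R.α i, R.S i, isRefl_S hR i, ?_, ?_⟩
  · rw [mul_assoc, S_mul_self hR, mul_one]
  · exact h

lemma len_S_cases (hR : R.IsRootSystem) {g : R.Aut} (hg : R.Ex g) (i : Fin R.r) :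
    R.len g < R.len (g * R.S i) ∨ R.len (g * R.S i) < R.len g := by
  rcases neg_mem_phi_cases hR hg (hR.simple_mem i) with hp | hn
  · exact Or.inl (len_gt_of_pos hR hg (isRefl_S hR i) hp)
  · exact Or.inr (len_lt_of_neg hR hg (isRefl_S hR i) hn)

/-- the master combined induction: subword property, right lifting, right descent lifting -/
lemma master (hR : R.IsRootSystem) : ∀ N : ℕ,
    (∀ l : List (Fin R.r), R.Reduced l → l.length ≤ N →
      ∀ l', l'.Sublist l → R.Bru (R.wordProd l') (R.wordProd l)) ∧
    (∀ u : R.Aut, R.Ex u → ∀ i : Fin R.r, R.len u < R.len (u * R.S i) →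
      ∀ w, R.Bru u w → R.len w ≤ N → R.len w < R.len (w * R.S i) →
        R.Bru (u * R.S i) (w * R.S i)) ∧
    (∀ z : R.Aut, R.Ex z → R.len z ≤ N → ∀ (u : R.Aut) (i : Fin R.r), R.Ex u → R.Bru u z →
      R.len u < R.len (u * R.S i) → R.len (z * R.S i) < R.len z → R.Bru (u * R.S i) z) := by
  intro N
  induction N with
  | zero =>
      refine ⟨?_, ?_, ?_⟩
      · intro l _ hlen l' hsub
        rw [Nat.le_zero, List.length_eq_zero_iff] at hlen
        subst hlen
        rw [List.sublist_nil.mp hsub]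
        exact Bru.refl _
      · intro u hu i hui w hb hw hwi
        have hEx : R.Ex w := hb.ex hu
        have hw1 : w = 1 := eq_one_of_len_zero hEx (by omega)
        subst hw1
        have hu1 : u = 1 := hb.eq_of_len_ge (by omega)
        subst hu1
        exact Bru.refl _
      · intro z hz hlen u i hu hb hui hzi
        omega
  | succ N ih =>
      obtain ⟨ihQ, ihR, ihR2⟩ := ih
      -- first prove R2 at level N+1 (uses ihQ, ihR)
      have hR2 : ∀ z : R.Aut, R.Ex z → R.len z ≤ N + 1 → ∀ (u : R.Aut) (i : Fin R.r),
          R.Ex u → R.Bru u z → R.len u < R.len (u * R.S i) → R.len (z * R.S i) < R.len z →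
          R.Bru (u * R.S i) z := by
        intro z hz hlen u i hu hb hui hzi
        have hzsEx : R.Ex (z * R.S i) := hz.mul (Ex.S i)
        obtain ⟨c, hcred, hcprod, hclen⟩ := exists_reduced_word hzsEx
        have hzz : R.len z ≤ R.len (z * R.S i) + 1 := len_ge_sub hz hR i
        have hcN : c.length ≤ N := by omega
        have hbprod : R.wordProd (c ++ [i]) = z := by
          rw [wordProd_append, wordProd_singleton, hcprod, mul_assoc, S_mul_self hR, mul_one]
        have hbred : R.Reduced (c ++ [i]) := by
          rw [Reduced, hbprod]
          simp only [List.length_append, List.length_singleton]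
          omega
        obtain ⟨c', hsub, hprodc'⟩ := bru_subword hR hb (c ++ [i]) hbred hbprod
        rcases List.sublist_append_iff.mp hsub with ⟨d, e, rfl, hd, he⟩
        rcases sublist_singleton_cases he with rfl | rfl
        · -- u is a subword of c : u ≤ z * S i
          rw [List.append_nil] at hprodc'
          have h1 : R.Bru u (z * R.S i) := by
            have := ihQ c hcred hcN d hd
            rw [hprodc', hcprod] at this
            exact this
          have h2 : R.len (z * R.S i) < R.len (z * R.S i * R.S i) := by
            have e2 : z * R.S i * R.S i = z := by rw [mul_assoc, S_mul_self hR, mul_one]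
            rw [e2]
            exact hzi
          have h3 := ihR u hu i hui (z * R.S i) h1 (by omega) h2
          have e3 : z * R.S i * R.S i = z := by rw [mul_assoc, S_mul_self hR, mul_one]
          rw [e3] at h3
          exact h3
        · -- u = (prod d) * S i, so u * S i = prod d ≤ z * S i ≤ z
          have husi : u * R.S i = R.wordProd d := by
            rw [← hprodc', wordProd_append, wordProd_singleton, mul_assoc,
              S_mul_self hR, mul_one]
          have h1 : R.Bru (u * R.S i) (z * R.S i) := by
            have := ihQ c hcred hcN d hd
            rw [hcprod] at this
            rw [husi]
            exact this
          exact h1.tail (step_S_down hR hz hzi)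
      -- now prove RR at level N+1 (uses hR2 at N, i.e. ihR2? no: uses R2 at ≤ N: ihR2)
      have hRR : ∀ u : R.Aut, R.Ex u → ∀ i : Fin R.r, R.len u < R.len (u * R.S i) →
          ∀ w, R.Bru u w → R.len w ≤ N + 1 → R.len w < R.len (w * R.S i) →
          R.Bru (u * R.S i) (w * R.S i) := by
        intro u hu i hui w hb
        induction hb with
        | refl => intro _ _; exact Bru.refl _
        | @tail z w hbz hstep ihz =>
            intro hwlen hwi
            obtain ⟨hzEx, γ, t, ht, rfl, hlt⟩ := hstep
            have hzN : R.len z ≤ N := by omega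
            rcases len_S_cases hR hzEx i with hA | hB
            · -- z goes up with S i
              have h1 : R.Bru (u * R.S i) (z * R.S i) := ihz (by omega) hA
              -- now step from z * S i to (z * t) * S i
              have hzsEx : R.Ex (z * R.S i) := hzEx.mul (Ex.S i)
              have heq : z * t * R.S i = (z * R.S i) * (R.S i * t * R.S i) := by
                have e1 : R.S i * R.S i = 1 := S_mul_self hR i
                calc z * t * R.S i = z * (R.S i * R.S i) * t * R.S i := by rw [e1]; group
                  _ = (z * R.S i) * (R.S i * t * R.S i) := by group
              have hlen2 : R.len (z * R.S i) < R.len (z * t * R.S i) := by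
                have l1 : R.len (z * R.S i) ≤ R.len z + 1 := len_mul_S_le hzEx i
                have l2 : R.len (z * t) ≤ R.len (z * t * R.S i) + 1 :=
                  len_ge_sub (hzEx.mul ht.2.1) hR i
                omega
              have hconj : R.Step (z * R.S i) (z * t * R.S i) := by
                have hSiInv : (R.S i)⁻¹ = R.S i := S_inv hR i
                rcases neg_mem_phi_cases hR (Ex.S i) (ht.phi hR) with hp | hn
                · refine ⟨hzsEx, R.S i γ, R.S i * t * R.S i, ?_, heq, hlen2⟩
                  have := ht.conj_pos hR (Ex.S i) hp
                  rw [hSiInv] at this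
                  exact this
                · refine ⟨hzsEx, -(R.S i γ), R.S i * t * R.S i, ?_, heq, hlen2⟩
                  have := ht.conj_neg hR (Ex.S i) hn
                  rw [hSiInv] at this
                  exact this
              exact h1.tail hconj
            · -- z goes down with S i : use R2 at level N
              have h1 : R.Bru (u * R.S i) z := ihR2 z hzEx hzN u i hu hbz hui hB
              have h2 : R.Bru z (z * t) := Bru.single ⟨hzEx, γ, t, ht, rfl, hlt⟩
              have h3 : R.Step (z * t) (z * t * R.S i) :=
                step_S_up hR (hzEx.mul ht.2.1) hwi
              exact ((h1.trans h2).tail h3)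
      refine ⟨?_, hRR, hR2⟩
      -- subword property Q1 at level N+1
      intro l hred hlen l' hsub
      rcases List.eq_nil_or_concat' l with rfl | ⟨b, i, rfl⟩
      · rw [List.sublist_nil.mp hsub]
        exact Bru.refl _
      · obtain ⟨hredb, hlenb⟩ := reduced_prefix hR hred
        have hbN : b.length ≤ N := by
          simp only [List.length_append, List.length_singleton] at hlen
          omega
        have hprodl : R.wordProd (b ++ [i]) = R.wordProd b * R.S i := by
          rw [wordProd_append, wordProd_singleton]
        have hwEx : R.Ex (R.wordProd b) := ⟨b, rfl⟩
        have hwup : R.len (R.wordProd b) < R.len (R.wordProd b * R.S i) := by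
          rw [← hprodl]
          omega
        rcases List.sublist_append_iff.mp hsub with ⟨d, e, rfl, hd, he⟩
        have hdEx : R.Ex (R.wordProd d) := ⟨d, rfl⟩
        rcases sublist_singleton_cases he with rfl | rfl
        · -- l' = d ⊆ b
          rw [List.append_nil]
          have h1 : R.Bru (R.wordProd d) (R.wordProd b) := ihQ b hredb hbN d hd
          have h2 : R.Step (R.wordProd b) (R.wordProd (b ++ [i])) := by
            rw [hprodl]
            exact step_S_up hR hwEx hwup
          exact h1.tail h2
        · -- l' = d ++ [i]
          have hprodd : R.wordProd (d ++ [i]) = R.wordProd d * R.S i := by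
            rw [wordProd_append, wordProd_singleton]
          have h1 : R.Bru (R.wordProd d) (R.wordProd b) := ihQ b hredb hbN d hd
          rcases len_S_cases hR hdEx i with hup | hdown
          · have := ihR (R.wordProd d) hdEx i hup (R.wordProd b) h1 (by
              have : R.len (R.wordProd b) ≤ b.length := len_le rfl
              omega) hwup
            rw [hprodd, hprodl]
            exact this
          · have h2 : R.Step (R.wordProd d * R.S i) (R.wordProd d) := step_S_down hR hdEx hdown
            have h3 : R.Step (R.wordProd b) (R.wordProd b * R.S i) := step_S_up hR hwEx hwup
            rw [hprodd, hprodl]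
            exact ((Bru.single h2).trans h1).tail h3

/-- subword property : a subword of a reduced word is below in Bruhat order -/
lemma subword_le (hR : R.IsRootSystem) {l l' : List (Fin R.r)} (hred : R.Reduced l)
    (hsub : l'.Sublist l) : R.Bru (R.wordProd l') (R.wordProd l) :=
  (master hR l.length).1 l hred le_rfl l' hsub

end Aux10

end RootData
namespace RootData

section Aux11

variable {R : RootData}

lemma S_inv_len (hR : R.IsRootSystem) {g : R.Aut} (hg : R.Ex g) (i : Fin R.r) :
    R.len (R.S i * g) = R.len (g⁻¹ * R.S i) := by
  have e : (R.S i * g)⁻¹ = g⁻¹ * R.S i := by rw [mul_inv_rev, S_inv hR]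
  rw [← e, len_inv hR ((Ex.S i).mul hg)]

lemma len_S_cases_left (hR : R.IsRootSystem) {g : R.Aut} (hg : R.Ex g) (i : Fin R.r) :
    R.len g < R.len (R.S i * g) ∨ R.len (R.S i * g) < R.len g := by
  have h1 := len_S_cases hR (hg.inv hR) i
  rw [S_inv_len hR hg i, ← len_inv hR hg]
  exact h1

lemma bru_S_up_left (hR : R.IsRootSystem) {g : R.Aut} (hg : R.Ex g) {i : Fin R.r}
    (h : R.len g < R.len (R.S i * g)) : R.Bru g (R.S i * g) := by
  have h1 : R.len g⁻¹ < R.len (g⁻¹ * R.S i) := by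
    rw [← S_inv_len hR hg i, len_inv hR hg]
    exact h
  have h2 : R.Bru g⁻¹ (g⁻¹ * R.S i) := Bru.single (step_S_up hR (hg.inv hR) h1)
  have h3 := h2.inv hR
  rw [inv_inv] at h3
  have e : (g⁻¹ * R.S i)⁻¹ = R.S i * g := by rw [mul_inv_rev, S_inv hR, inv_inv]
  rw [e] at h3
  exact h3

lemma bru_S_down_left (hR : R.IsRootSystem) {g : R.Aut} (hg : R.Ex g) {i : Fin R.r}
    (h : R.len (R.S i * g) < R.len g) : R.Bru (R.S i * g) g := by
  have h1 : R.len (g⁻¹ * R.S i) < R.len g⁻¹ := by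
    rw [← S_inv_len hR hg i, len_inv hR hg]
    exact h
  have h2 : R.Bru (g⁻¹ * R.S i) g⁻¹ := Bru.single (step_S_down hR (hg.inv hR) h1)
  have h3 := h2.inv hR
  rw [inv_inv] at h3
  have e : (g⁻¹ * R.S i)⁻¹ = R.S i * g := by rw [mul_inv_rev, S_inv hR, inv_inv]
  rw [e] at h3
  exact h3

lemma left_lift (hR : R.IsRootSystem) {u w : R.Aut} (hu : R.Ex u) (hw : R.Ex w)
    (hb : R.Bru u w) {i : Fin R.r} (hui : R.len u < R.len (R.S i * u))
    (hwi : R.len w < R.len (R.S i * w)) : R.Bru (R.S i * u) (R.S i * w) := by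
  have h1 : R.Bru u⁻¹ w⁻¹ := hb.inv hR
  have h2 : R.len u⁻¹ < R.len (u⁻¹ * R.S i) := by
    rw [← S_inv_len hR hu i, len_inv hR hu]; exact hui
  have h3 : R.len w⁻¹ < R.len (w⁻¹ * R.S i) := by
    rw [← S_inv_len hR hw i, len_inv hR hw]; exact hwi
  have h4 := (master hR (R.len w⁻¹)).2.1 u⁻¹ (hu.inv hR) i h2 w⁻¹ h1 le_rfl h3
  have h5 := h4.inv hR
  have e1 : (u⁻¹ * R.S i)⁻¹ = R.S i * u := by rw [mul_inv_rev, S_inv hR, inv_inv]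
  have e2 : (w⁻¹ * R.S i)⁻¹ = R.S i * w := by rw [mul_inv_rev, S_inv hR, inv_inv]
  rw [e1, e2] at h5
  exact h5

lemma left_lift_desc (hR : R.IsRootSystem) {u z : R.Aut} (hu : R.Ex u) (hz : R.Ex z)
    (hb : R.Bru u z) {i : Fin R.r} (hui : R.len u < R.len (R.S i * u))
    (hzi : R.len (R.S i * z) < R.len z) : R.Bru (R.S i * u) z := by
  have h1 : R.Bru u⁻¹ z⁻¹ := hb.inv hR
  have h2 : R.len u⁻¹ < R.len (u⁻¹ * R.S i) := by
    rw [← S_inv_len hR hu i, len_inv hR hu]; exact hui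
  have h3 : R.len (z⁻¹ * R.S i) < R.len z⁻¹ := by
    rw [← S_inv_len hR hz i, len_inv hR hz]; exact hzi
  have h4 := (master hR (R.len z⁻¹)).2.2 z⁻¹ (hz.inv hR) le_rfl u⁻¹ i (hu.inv hR) h1 h2 h3
  have h5 := h4.inv hR
  have e1 : (u⁻¹ * R.S i)⁻¹ = R.S i * u := by rw [mul_inv_rev, S_inv hR, inv_inv]
  rw [e1, inv_inv] at h5
  exact h5

lemma dmulList_dominates (hR : R.IsRootSystem) (N : List (Fin R.r)) (v : R.Aut) (hv : R.Ex v) :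
    R.Ex (R.dmulList N v) ∧
      ∀ N', N'.Sublist N → R.Bru (R.wordProd N' * v) (R.dmulList N v) := by
  induction N with
  | nil =>
      refine ⟨hv, ?_⟩
      intro N' hsub
      rw [List.sublist_nil.mp hsub, wordProd_nil, one_mul]
      exact Bru.refl _
  | cons i T ih =>
      obtain ⟨ihEx, ihDom⟩ := ih
      have hstep : R.dmulList (i :: T) v = R.dmulStep i (R.dmulList T v) := rfl
      set m := R.dmulList T v with hm
      have hmh : R.Bru m (R.dmulStep i m) ∧ R.Ex (R.dmulStep i m) ∧
          (R.len (R.S i * m) < R.len m → R.dmulStep i m = m) := by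
        rw [dmulStep]
        by_cases hif : R.len m < R.len (R.S i * m)
        · rw [if_pos hif]
          exact ⟨bru_S_up_left hR ihEx hif, (Ex.S i).mul ihEx, fun h => by omega⟩
        · rw [if_neg hif]
          exact ⟨Bru.refl _, ihEx, fun _ => rfl⟩
      rw [hstep]
      refine ⟨hmh.2.1, ?_⟩
      intro N' hsub
      rcases List.sublist_cons_iff.mp hsub with h1 | ⟨T'', rfl, hT⟩
      · exact (ihDom N' h1).trans hmh.1
      · have hy : R.wordProd (i :: T'') * v = R.S i * (R.wordProd T'' * v) := by
          rw [wordProd_cons, mul_assoc]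
        set y := R.wordProd T'' * v with hydef
        have hyEx : R.Ex y := Ex.mul ⟨T'', rfl⟩ hv
        have hby : R.Bru y m := ihDom T'' hT
        rw [hy]
        rcases len_S_cases_left hR ihEx i with hup | hdown
        · -- target is S i * m
          have htarget : R.dmulStep i m = R.S i * m := by rw [dmulStep, if_pos hup]
          rw [htarget]
          rcases len_S_cases_left hR hyEx i with hyup | hydown
          · exact left_lift hR hyEx ihEx hby hyup hup
          · exact (bru_S_down_left hR hyEx hydown).trans
              (hby.trans (bru_S_up_left hR ihEx hup))
        · -- target is m
          have htarget : R.dmulStep i m = m := hmh.2.2 hdown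
          rw [htarget]
          rcases len_S_cases_left hR hyEx i with hyup | hydown
          · exact left_lift_desc hR hyEx ihEx hby hyup hdown
          · exact (bru_S_down_left hR hyEx hydown).trans hby

lemma IsRefl.eq_s (hR : R.IsRootSystem) {γ : R.V} {t : R.Aut} (h : R.IsRefl γ t) :
    t = R.s γ := by
  obtain ⟨h1, h2, h3, h4, h5, h6⟩ := h
  have hγΦ : γ ∈ R.Φ := hR.pos_subset h1
  apply refl_unique hR hγΦ
  · exact h5
  · intro v
    exact ⟨-(R.coroot γ v), by rw [s_apply hR hγΦ, neg_smul]; abel⟩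
  · exact h4
  · exact s_apply_self hR hγΦ
  · exact h6
  · intro β hβ
    exact s_maps_phi hR hγΦ hβ
  · exact s_mul_self hR hγΦ

/-- dominance: if `a ≤ b` in Bruhat order then `a λ - b λ` is a nonnegative
combination of positive roots, tested against any functional nonnegative on `pos`. -/
lemma bru_dominance (hR : R.IsRootSystem) {a b : R.Aut} (hb : R.Bru a b) {lam : R.V}
    (hdom : R.Dominant lam) (f : Module.Dual ℚ R.V) (hf : ∀ β ∈ R.pos, 0 ≤ f β) :
    0 ≤ f (a lam - b lam) := by
  induction hb with
  | refl => simp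
  | @tail y w hby hstep ih =>
      obtain ⟨hy, γ, t, ht, rfl, hlt⟩ := hstep
      have hyγ : y γ ∈ R.pos := by
        rcases neg_mem_phi_cases hR hy (ht.phi hR) with hp | hn
        · exact hp
        · exfalso
          have := len_lt_of_neg hR hy ht hn
          omega
      have hts : t = R.s γ := ht.eq_s hR
      have hkey : y lam - (y * t) lam = R.coroot γ lam • (y γ) := by
        have e1 : (y * t) lam = y (t lam) := rfl
        rw [e1, hts, s_apply hR (hR.pos_subset ht.1), map_sub, map_smul]
        abel
      have h2 : f (a lam - (y * t) lam) = f (a lam - y lam) + f (y lam - (y * t) lam) := by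
        rw [← map_add]
        congr 1
        abel
      rw [h2, hkey, map_smul, smul_eq_mul]
      have h3 : 0 ≤ R.coroot γ lam := coroot_pos_dominant hR hdom ht.1
      have h4 : 0 ≤ f (y γ) := hf _ hyγ
      nlinarith

end Aux11

end RootData
namespace RootData

section Aux12

variable {R : RootData}

lemma xi_nonneg_on_pos (hR : R.IsRootSystem) (x : Fin R.r → Module.Dual ℚ R.V)
    (hx : ∀ i j : Fin R.r, x j (R.α i) = if i = j then 1 else 0) (i : Fin R.r)
    {β : R.V} (hβ : β ∈ R.pos) : 0 ≤ x i β := by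
  obtain ⟨c, hc, rfl⟩ := hR.pos_nonneg_comb β hβ
  rw [map_sum]
  have h1 : ∀ k : Fin R.r, x i (c k • R.α k) = if k = i then c k else 0 := by
    intro k
    rw [map_smul, smul_eq_mul, hx k i]
    by_cases h : k = i <;> simp [h]
  rw [Finset.sum_congr rfl (fun k _ => h1 k), Finset.sum_ite_eq' Finset.univ i c]
  simp only [Finset.mem_univ, if_true]
  exact hc i

/-- the key comparison: if `w⁻¹ ⋆ v ≤ u` in Bruhat order, then for any `u' ≤ w`,
`⟨λ, u x_i⟩ ≤ ⟨u' λ, v x_i⟩`. -/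
lemma key_ineq (hR : R.IsRootSystem) (x : Fin R.r → Module.Dual ℚ R.V)
    (hx : ∀ i j : Fin R.r, x j (R.α i) = if i = j then 1 else 0)
    {lam : R.V} (hdom : R.Dominant lam) {w u v u' : R.Aut}
    (hEw : R.Ex w) (hEu : R.Ex u) (hEv : R.Ex v)
    (hu' : R.BruhatLE u' w) (hbru : R.BruhatLE (R.dmul w⁻¹ v) u) (i : Fin R.r) :
    x i (u⁻¹ lam) ≤ x i ((v⁻¹ * u') lam) := by
  -- u' ≤ w in the chain order
  obtain ⟨lw, hlwred, hlwprod, l', hsub, hl'prod⟩ := hu'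
  have hbu'w : R.Bru u' w := by
    have := subword_le hR hlwred hsub
    rw [hlwprod, hl'prod] at this
    exact this
  have hbu'winv : R.Bru u'⁻¹ w⁻¹ := hbu'w.inv hR
  -- unfold the Demazure product
  have hhw : ∃ l : List (Fin R.r), R.Reduced l ∧ R.wordProd l = w⁻¹ :=
    exists_reduced (hEw.inv hR)
  have hdm : R.dmul w⁻¹ v = R.dmulList hhw.choose v := by
    rw [dmul, dif_pos hhw]
  obtain ⟨hredstar, hprodstar⟩ := hhw.choose_spec
  -- u'⁻¹ is a subword product of the chosen reduced word for w⁻¹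
  obtain ⟨m', hm'sub, hm'prod⟩ := bru_subword hR hbu'winv hhw.choose hredstar hprodstar
  -- Demazure domination
  have hdomin := (dmulList_dominates hR hhw.choose v hEv).2 m' hm'sub
  rw [hm'prod, ← hdm] at hdomin
  -- d ≤ u
  obtain ⟨lu, hlured, hluprod, l'', hsub'', hl''prod⟩ := hbru
  have hbdu : R.Bru (R.dmul w⁻¹ v) u := by
    have := subword_le hR hlured hsub''
    rw [hluprod, hl''prod] at this
    exact this
  -- chain: u'⁻¹ * v ≤ u , then invert
  have hchain : R.Bru (u'⁻¹ * v) u := hdomin.trans hbdu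
  have hchain2 : R.Bru (v⁻¹ * u') u⁻¹ := by
    have h1 := hchain.inv hR
    rw [mul_inv_rev, inv_inv] at h1
    exact h1
  -- dominance
  have hdomi := bru_dominance hR hchain2 hdom (x i) (fun β hβ => xi_nonneg_on_pos hR x hx i hβ)
  have h2 : x i ((v⁻¹ * u') lam - u⁻¹ lam) = x i ((v⁻¹ * u') lam) - x i (u⁻¹ lam) :=
    map_sub _ _ _
  rw [h2] at hdomi
  linarith

end Aux12

end RootData

theorem statement9 (R : RootData) (hR : R.IsRootSystem)
    (x : Fin R.r → Module.Dual ℚ R.V)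
    (hx : ∀ i j : Fin R.r, x j (R.α i) = if i = j then 1 else 0)
    (lam : R.V) (hdom : R.Dominant lam)
    (w : R.Aut) (hw : w ∈ R.weylGroup)
    (mu : R.V) (hmu : mu ∈ R.demPolytope lam w) :
    ∀ (i : Fin R.r) (u v : R.Aut), u ∈ R.weylGroup → v ∈ R.weylGroup →
      R.BruhatLE (R.dmul w⁻¹ v) u →
      R.dualAct u (x i) lam ≤ R.dualAct v (x i) mu := by
  intro i u v huW hvW hbru
  have hEw : R.Ex w := RootData.Ex.of_mem_weylGroup hR hw
  have hEu : R.Ex u := RootData.Ex.of_mem_weylGroup hR huW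
  have hEv : R.Ex v := RootData.Ex.of_mem_weylGroup hR hvW
  set c : ℚ := R.dualAct u (x i) lam with hc
  set F : Module.Dual ℚ R.V := R.dualAct v (x i) with hF
  have hsubset : {m : R.V | ∃ u' : R.Aut, u' ∈ R.weylGroup ∧ R.BruhatLE u' w ∧ m = u' lam}
      ⊆ {m : R.V | c ≤ F m} := by
    rintro m ⟨u', hu'W, hu'le, rfl⟩
    have hkey := RootData.key_ineq hR x hx hdom hEw hEu hEv hu'le hbru i
    have e1 : c = x i (u⁻¹ lam) := rfl
    have e2 : F (u' lam) = x i ((v⁻¹ * u') lam) := rfl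
    rw [Set.mem_setOf_eq, e1, e2]
    exact hkey
  have hconv : Convex ℚ {m : R.V | c ≤ F m} :=
    convex_halfSpace_ge (LinearMap.isLinear F) c
  have := convexHull_min hsubset hconv hmu
  exact this
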